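/- arXiv:math/0610905 — 6 statements merged into one kernel-verified Lean document; each statement's English description precedes it below -/
import Mathlib

section
/- Define φ : 𝕋∖{1} → ℂ by φ(w) = ((1+w)/2)·exp(−(1+w)/(1−w)); one has |φ(w)| ≤ 1 for every w ∈ 𝕋∖{1}. There exist a constant C > 0 and h₀ ∈ (0,1) such that for every ξ ∈ 𝕋 and every h ∈ (0,h₀], m({w ∈ 𝕋∖{1} : |φ(w) − ξ| < h}) ≤ C·h^{3/2}. -/
set_option maxHeartbeats 1000000

open MeasureTheory

/-- The normalized Lebesgue (Haar) measure on the unit circle `𝕋 ⊆ ℂ`,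
realized as a measure on `ℂ` carried by the circle. -/
noncomputable def circleMeasure : Measure ℂ :=
  (ENNReal.ofReal (2 * Real.pi))⁻¹ •
    (Measure.map (fun t : ℝ => Complex.exp (t * Complex.I))
      (volume.restrict (Set.Ioc 0 (2 * Real.pi))))

/-- The boundary-value function `φ(w) = ((1+w)/2)·exp(−(1+w)/(1−w))`. -/
noncomputable def phi2 (w : ℂ) : ℂ :=
  ((1 + w) / 2) * Complex.exp (-(1 + w) / (1 - w))

open Real Set

lemma abs_phi2_le {w : ℂ} (hw : ‖w‖ = 1) (h1 : w ≠ 1) :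
    ‖phi2 w‖ ≤ 1 := by
  have hns : Complex.normSq w = 1 := by
    rw [← Complex.sq_norm, hw]; norm_num
  have hre : ((1 + w) / (1 - w)).re = 0 := by
    rw [Complex.div_re]
    have : (1 + w).re * (1 - w).re + (1 + w).im * (1 - w).im = 0 := by
      simp only [Complex.add_re, Complex.sub_re, Complex.one_re, Complex.add_im,
        Complex.sub_im, Complex.one_im, zero_add, zero_sub]
      have := hns
      rw [Complex.normSq_apply] at this
      nlinarith
    rw [← add_div, this, zero_div]
  have habs : ‖Complex.exp (-(1 + w) / (1 - w))‖ = 1 := by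
    rw [Complex.norm_exp]
    have : (-(1 + w) / (1 - w)).re = 0 := by
      rw [neg_div, Complex.neg_re, hre, neg_zero]
    rw [this, Real.exp_zero]
  rw [phi2, norm_mul, habs, mul_one, norm_div]
  have : ‖1 + w‖ ≤ 2 := by
    calc ‖1 + w‖ ≤ ‖(1:ℂ)‖ + ‖w‖ := norm_add_le _ _
    _ = 2 := by rw [hw, norm_one]; norm_num
  simp only [Complex.norm_ofNat]
  linarith [this]

noncomputable def Gf (t : ℝ) : ℝ := t / 2 - Real.cos (t / 2) / Real.sin (t / 2)

lemma phi2_exp {t : ℝ} (hd : Real.sin (t / 2) ≠ 0) :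
    phi2 (Complex.exp ((t : ℂ) * Complex.I)) =
      (Real.cos (t / 2) : ℂ) * Complex.exp ((Gf t : ℝ) * Complex.I) := by
  set s : ℝ := t / 2 with hs
  set c : ℂ := (Real.cos s : ℂ) with hc
  set d : ℂ := (Real.sin s : ℂ) with hd'
  have hdc : d ≠ 0 := Complex.ofReal_ne_zero.mpr hd
  have hcd : c ^ 2 + d ^ 2 = 1 := by
    have h := Real.sin_sq_add_cos_sq s
    have : c ^ 2 + d ^ 2 = ((Real.cos s ^ 2 + Real.sin s ^ 2 : ℝ) : ℂ) := by
      rw [hc, hd']; push_cast; ring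
    rw [this]; norm_cast; linarith
  have hE : Complex.exp ((s : ℂ) * Complex.I) = c + d * Complex.I := by
    rw [Complex.exp_mul_I, ← Complex.ofReal_cos, ← Complex.ofReal_sin]
  have hEne : (c + d * Complex.I) ≠ 0 := by rw [← hE]; exact Complex.exp_ne_zero _
  have hw : Complex.exp ((t : ℂ) * Complex.I) = (c + d * Complex.I) ^ 2 := by
    have ht2 : (t : ℂ) * Complex.I = (s : ℂ) * Complex.I + (s : ℂ) * Complex.I := by
      push_cast [hs]; ring
    rw [ht2, Complex.exp_add, hE]; ring
  have hI2 : Complex.I ^ 2 = -1 := Complex.I_sq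
  have hI3 : Complex.I ^ 3 = -Complex.I := by
    rw [pow_succ, hI2]; ring
  have h1p : 1 + (c + d * Complex.I) ^ 2 = 2 * c * (c + d * Complex.I) := by
    have h1 : (1 : ℂ) = c ^ 2 + d ^ 2 := hcd.symm
    rw [h1]; ring_nf; rw [hI2]; ring
  have h1m : 1 - (c + d * Complex.I) ^ 2 = -2 * d * Complex.I * (c + d * Complex.I) := by
    have h1 : (1 : ℂ) = c ^ 2 + d ^ 2 := hcd.symm
    rw [h1]; ring_nf; rw [hI2]; ring
  have hne2 : -2 * d * Complex.I * (c + d * Complex.I) ≠ 0 := by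
    apply mul_ne_zero (mul_ne_zero (mul_ne_zero (by norm_num) hdc) Complex.I_ne_zero) hEne
  have hdiv : -(1 + (c + d * Complex.I) ^ 2) / (1 - (c + d * Complex.I) ^ 2)
      = -(c / d) * Complex.I := by
    rw [h1p, h1m]
    have key : (-(c / d) * Complex.I) * (-2 * d * Complex.I * (c + d * Complex.I))
        = -(2 * c * (c + d * Complex.I)) := by
      calc (-(c / d) * Complex.I) * (-2 * d * Complex.I * (c + d * Complex.I))
          = 2 * (c * (d / d)) * (Complex.I * Complex.I) * (c + d * Complex.I) := by ring
        _ = -(2 * c * (c + d * Complex.I)) := by rw [div_self hdc, Complex.I_mul_I]; ring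
    rw [← key, mul_div_assoc, div_self hne2, mul_one]
  have hGf : ((Gf t : ℝ) : ℂ) * Complex.I = (s : ℂ) * Complex.I + (-(c / d)) * Complex.I := by
    simp only [Gf, ← hs, hc, hd']
    push_cast
    ring
  calc phi2 (Complex.exp ((t : ℂ) * Complex.I))
      = (2 * c * (c + d * Complex.I)) / 2 * Complex.exp (-(c / d) * Complex.I) := by
        rw [phi2, hw, hdiv, h1p]
    _ = (Real.cos (t / 2) : ℂ) * Complex.exp ((Gf t : ℝ) * Complex.I) := by
        rw [hGf, Complex.exp_add, ← hE, ← hc]; ring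

lemma hasDerivAt_Gf {t : ℝ} (hd : Real.sin (t / 2) ≠ 0) :
    HasDerivAt Gf (1 / 2 + 1 / (2 * Real.sin (t / 2) ^ 2)) t := by
  have h2 : HasDerivAt (fun u : ℝ => u / 2) (1 / 2) t := by
    simpa using (hasDerivAt_id t).div_const 2
  have hcos : HasDerivAt (fun u : ℝ => Real.cos (u / 2)) (-Real.sin (t / 2) * (1 / 2)) t :=
    HasDerivAt.comp (h₂ := Real.cos) t (Real.hasDerivAt_cos (t / 2)) h2
  have hsin : HasDerivAt (fun u : ℝ => Real.sin (u / 2)) (Real.cos (t / 2) * (1 / 2)) t :=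
    HasDerivAt.comp (h₂ := Real.sin) t (Real.hasDerivAt_sin (t / 2)) h2
  have hq := hcos.div hsin hd
  have := h2.sub hq
  refine this.congr_deriv ?_
  have hpyth := Real.sin_sq_add_cos_sq (t / 2)
  field_simp
  nlinarith [hpyth, sq_nonneg (Real.sin (t / 2))]

lemma sin_half_pos {t : ℝ} (h0 : 0 < t) (ht : t ≤ π) : 0 < Real.sin (t / 2) :=
  Real.sin_pos_of_pos_of_lt_pi (by linarith) (by linarith [Real.pi_gt_three])

lemma cot_half_lt {t : ℝ} (h0 : 0 < t) (ht : t ≤ 1) :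
    Real.cos (t / 2) / Real.sin (t / 2) < 2 / t := by
  have hs0 : 0 < t / 2 := by linarith
  have hs1 : t / 2 < π / 2 := by nlinarith [Real.pi_gt_three]
  have htan := Real.lt_tan hs0 hs1
  have htanpos : 0 < Real.tan (t / 2) := lt_trans hs0 htan
  rw [Real.tan_eq_sin_div_cos] at htan htanpos
  have hsin : 0 < Real.sin (t / 2) := sin_half_pos h0 (by nlinarith [Real.pi_gt_three])
  have hcos : 0 < Real.cos (t / 2) := Real.cos_pos_of_mem_Ioo ⟨by linarith, hs1⟩
  rw [div_lt_div_iff₀ hsin (by linarith : (0:ℝ) < t)]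
  rw [lt_div_iff₀ hcos] at htan
  nlinarith

lemma cot_half_ge {t : ℝ} (h0 : 0 < t) (ht : t ≤ 1) :
    2 / t - t / 4 ≤ Real.cos (t / 2) / Real.sin (t / 2) := by
  have hsin : 0 < Real.sin (t / 2) := sin_half_pos h0 (by nlinarith [Real.pi_gt_three])
  have hsle : Real.sin (t / 2) ≤ t / 2 := Real.sin_le (by linarith)
  have hcos : 1 - (t / 2) ^ 2 / 2 ≤ Real.cos (t / 2) := Real.one_sub_sq_div_two_le_cos
  have hcos0 : 0 ≤ 1 - (t / 2) ^ 2 / 2 := by nlinarith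
  have step1 : (1 - (t / 2) ^ 2 / 2) / (t / 2) ≤ Real.cos (t / 2) / Real.sin (t / 2) := by
    rw [div_le_div_iff₀ (by linarith : (0:ℝ) < t / 2) hsin]
    nlinarith
  have step2 : (1 - (t / 2) ^ 2 / 2) / (t / 2) = 2 / t - t / 4 := by
    field_simp
    ring
  linarith [step1, step2.symm.le, step2.le]

lemma Gf_lower {t : ℝ} (h0 : 0 < t) (ht : t ≤ 1) : -(2 / t) ≤ Gf t := by
  have := cot_half_lt h0 ht
  rw [Gf]; linarith

lemma Gf_upper {t : ℝ} (h0 : 0 < t) (ht : t ≤ 1) : Gf t ≤ t - 2 / t := by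
  have := cot_half_ge h0 ht
  rw [Gf]; linarith

lemma Gf_le_half {t : ℝ} (h0 : 0 < t) (ht : t ≤ π) : Gf t ≤ t / 2 := by
  have hsin : 0 < Real.sin (t / 2) := sin_half_pos h0 ht
  have hcos : 0 ≤ Real.cos (t / 2) :=
    Real.cos_nonneg_of_mem_Icc ⟨by linarith [Real.pi_pos], by linarith⟩
  have : 0 ≤ Real.cos (t / 2) / Real.sin (t / 2) := div_nonneg hcos hsin.le
  rw [Gf]; linarith

lemma Gf_continuousOn {S : Set ℝ} (hS : ∀ x ∈ S, Real.sin (x / 2) ≠ 0) :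
    ContinuousOn Gf S := by
  apply ContinuousOn.sub
  · exact (continuous_id.div_const 2).continuousOn
  · exact ContinuousOn.div
      ((Real.continuous_cos.comp (continuous_id.div_const 2)).continuousOn)
      ((Real.continuous_sin.comp (continuous_id.div_const 2)).continuousOn) hS

lemma E_vol {c δ h β : ℝ} (hδ0 : 0 < δ) (hδ : δ ≤ 1/2) (hh : 0 < h) (hβ0 : 0 ≤ β)
    (hβ : ∀ t, t ∈ Ioc 0 δ → |Gf t - c| ≤ π * h → t ≤ β) :
    volume {t : ℝ | t ∈ Ioc 0 δ ∧ |Gf t - c| ≤ π * h} ≤ ENNReal.ofReal (π * h * β ^ 2) := by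
  have hπ := Real.pi_gt_three
  set E := {t : ℝ | t ∈ Ioc 0 δ ∧ |Gf t - c| ≤ π * h} with hEdef
  rcases Set.eq_empty_or_nonempty E with h0 | hne
  · rw [h0]
    simp only [measure_empty]
    positivity
  have hD : 0 < δ + |c| + π * h := by positivity
  set t₀ : ℝ := 2 / (δ + |c| + π * h) with ht₀def
  have ht₀pos : 0 < t₀ := by positivity
  have hlow : ∀ t ∈ E, t₀ ≤ t := by
    intro t ht
    obtain ⟨⟨htp, htδ⟩, habs⟩ := ht
    have h1 : Gf t ≤ t - 2 / t := Gf_upper htp (htδ.trans (by linarith))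
    have h2 : c - π * h ≤ Gf t := by
      have := abs_le.mp habs
      linarith [this.1]
    have h3 : 2 / t ≤ δ + |c| + π * h := by
      have := neg_abs_le c
      linarith
    rw [ht₀def, div_le_iff₀ hD]
    rw [div_le_iff₀ htp] at h3
    linarith [mul_comm t (δ + |c| + π * h)]
  have hEsub : E ⊆ Icc t₀ δ := fun t ht => ⟨hlow t ht, ht.1.2⟩
  have hsinne : ∀ x ∈ Icc t₀ δ, Real.sin (x / 2) ≠ 0 := by
    intro x hx
    exact (sin_half_pos (lt_of_lt_of_le ht₀pos hx.1) (by linarith [hx.2])).ne'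
  have hEeq : E = Icc t₀ δ ∩ Gf ⁻¹' (Icc (c - π * h) (c + π * h)) := by
    ext t
    constructor
    · intro ht
      refine ⟨hEsub ht, ?_⟩
      have := abs_le.mp ht.2
      exact ⟨by linarith [this.1], by linarith [this.2]⟩
    · rintro ⟨⟨h1, h2⟩, h3⟩
      exact ⟨⟨lt_of_lt_of_le ht₀pos h1, h2⟩, abs_le.mpr ⟨by linarith [h3.1], by linarith [h3.2]⟩⟩
  have hclosed : IsClosed E := by
    rw [hEeq]
    exact (Gf_continuousOn hsinne).preimage_isClosed_of_isClosed isClosed_Icc isClosed_Icc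
  have hcomp : IsCompact E := isCompact_Icc.of_isClosed_subset hclosed hEsub
  set a := sInf E with ha
  set b := sSup E with hb
  have haE : a ∈ E := hcomp.sInf_mem hne
  have hbE : b ∈ E := hcomp.sSup_mem hne
  have hab : ∀ t ∈ E, a ≤ t ∧ t ≤ b := fun t ht =>
    ⟨csInf_le hcomp.bddBelow ht, le_csSup hcomp.bddAbove ht⟩
  have hEIcc : E ⊆ Icc a b := fun t ht => ⟨(hab t ht).1, (hab t ht).2⟩
  have hvol : volume E ≤ ENNReal.ofReal (b - a) := by
    calc volume E ≤ volume (Icc a b) := measure_mono hEIcc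
      _ = ENNReal.ofReal (b - a) := Real.volume_Icc
  refine hvol.trans (ENNReal.ofReal_le_ofReal ?_)
  have hbβ : b ≤ β := hβ b hbE.1 hbE.2
  have hb0 : 0 < b := hbE.1.1
  rcases le_or_gt b a with hba | hab'
  · have : (0:ℝ) ≤ π * h * β ^ 2 := by positivity
    linarith
  -- MVT
  have hIccsub : Icc a b ⊆ Icc t₀ δ := Icc_subset_Icc (hlow a haE) hbE.1.2
  have hcont : ContinuousOn Gf (Icc a b) :=
    (Gf_continuousOn hsinne).mono hIccsub
  have hderiv : ∀ x ∈ Ioo a b, HasDerivAt Gf (1 / 2 + 1 / (2 * Real.sin (x / 2) ^ 2)) x := by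
    intro x hx
    exact hasDerivAt_Gf (hsinne x ⟨(hlow a haE).trans hx.1.le, hx.2.le.trans hbE.1.2⟩)
  obtain ⟨x, hx, hslope⟩ := exists_hasDerivAt_eq_slope Gf _ hab' hcont hderiv
  have hx0 : 0 < x := lt_trans haE.1.1 hx.1
  have hsx : 0 < Real.sin (x / 2) :=
    sin_half_pos hx0 (by linarith [hx.2.le.trans hbE.1.2, hπ] : x ≤ π)
  have hsxle : Real.sin (x / 2) ≤ x / 2 := Real.sin_le (by linarith)
  have hslope_ge : 2 / b ^ 2 ≤ (Gf b - Gf a) / (b - a) := by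
    rw [← hslope]
    have h1 : Real.sin (x / 2) ^ 2 ≤ x ^ 2 / 4 := by nlinarith
    have h2 : 1 / (2 * Real.sin (x / 2) ^ 2) ≥ 2 / x ^ 2 := by
      rw [ge_iff_le, div_le_div_iff₀ (by positivity) (by positivity)]
      nlinarith
    have h3 : (2 : ℝ) / x ^ 2 ≥ 2 / b ^ 2 := by
      apply div_le_div_of_nonneg_left (by norm_num) (by positivity)
      nlinarith [hx.2, hx0]
    linarith
  have hGdiff : Gf b - Gf a ≤ 2 * (π * h) := by
    have h1 := abs_le.mp haE.2
    have h2 := abs_le.mp hbE.2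
    linarith [h1.1, h2.2]
  have hfinal : b - a ≤ π * h * b ^ 2 := by
    rw [div_le_div_iff₀ (by positivity) (by linarith)] at hslope_ge
    nlinarith
  have hsq : b ^ 2 ≤ β ^ 2 := by nlinarith
  nlinarith [mul_le_mul_of_nonneg_left hsq (by positivity : (0:ℝ) ≤ π * h)]

lemma abs_exp_sub_exp (θ α : ℝ) :
    ‖Complex.exp ((θ : ℂ) * Complex.I) - Complex.exp ((α : ℂ) * Complex.I)‖
      = 2 * |Real.sin ((θ - α) / 2)| := by
  set m : ℝ := (θ + α) / 2
  set x : ℝ := (θ - α) / 2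
  have h1 : (θ : ℂ) * Complex.I = (m : ℂ) * Complex.I + (x : ℂ) * Complex.I := by
    push_cast [m, x]; ring
  have h2 : (α : ℂ) * Complex.I = (m : ℂ) * Complex.I + (-x : ℝ) * Complex.I := by
    push_cast [m, x]; ring
  rw [h1, h2, Complex.exp_add, Complex.exp_add, ← mul_sub, norm_mul,
    Complex.norm_exp_ofReal_mul_I, one_mul]
  rw [Complex.exp_mul_I, Complex.exp_mul_I]
  push_cast
  rw [Complex.cos_neg, Complex.sin_neg]
  have : Complex.cos x + Complex.sin x * Complex.I - (Complex.cos x + -Complex.sin x * Complex.I)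
      = (2 * Real.sin x : ℝ) * Complex.I := by
    push_cast [← Complex.ofReal_sin]
    ring
  rw [this, norm_mul, Complex.norm_I, mul_one, Complex.norm_real, Real.norm_eq_abs, abs_mul]
  norm_num

lemma near_multiple {x h : ℝ} (hh : 0 ≤ h) (hx : |Real.sin x| ≤ h) :
    ∃ k : ℤ, |x - k * π| ≤ π / 2 * h := by
  have hπ := Real.pi_pos
  refine ⟨round (x / π), ?_⟩
  set k := round (x / π)
  set y := x - k * π with hy
  have hyb : |y| ≤ π / 2 := by
    have h1 := abs_sub_round (x / π)
    have h2 : y = (x / π - k) * π := by rw [hy]; field_simp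
    rw [h2, abs_mul, abs_of_pos hπ]
    nlinarith [abs_nonneg (x / π - (k:ℝ))]
  have hsy : |Real.sin y| ≤ h := by
    have hs : Real.sin (y + k * π) = (-1) ^ k * Real.sin y := Real.sin_add_int_mul_pi y k
    have hxy : x = y + k * π := by rw [hy]; ring
    have habs1 : |((-1 : ℝ)) ^ k| = 1 := by
      rcases Int.even_or_odd k with he | ho
      · rw [he.neg_one_zpow, abs_one]
      · rw [ho.neg_one_zpow, abs_neg, abs_one]
    rw [hxy, hs, abs_mul, habs1, one_mul] at hx
    exact hx
  have hj : 2 / π * |y| ≤ Real.sin |y| := Real.mul_le_sin (abs_nonneg y) hyb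
  have hsin_abs : Real.sin |y| = |Real.sin y| := by
    rcases abs_cases y with ⟨h1, h2⟩ | ⟨h1, h2⟩
    · rw [h1, abs_of_nonneg (Real.sin_nonneg_of_nonneg_of_le_pi h2 (by linarith [hyb, h1]))]
    · rw [h1, Real.sin_neg,
        abs_of_nonpos (Real.sin_nonpos_of_nonpos_of_neg_pi_le h2.le (by linarith [hyb, h1]))]
  have hcomb : 2 / π * |y| ≤ h := by rw [hsin_abs] at hj; linarith
  have hid : π / 2 * (2 / π) = 1 := by field_simp
  nlinarith [mul_le_mul_of_nonneg_left hcomb (by positivity : (0:ℝ) ≤ π / 2)]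

lemma localization {ξ : ℂ} (hξ : ‖ξ‖ = 1) {h t : ℝ} (hh : 0 < h) (hh2 : h ≤ 1/100)
    (ht : t ∈ Ioc 0 π) (hc : ‖phi2 (Complex.exp ((t : ℂ) * Complex.I)) - ξ‖ < h) :
    t ≤ 5 * Real.sqrt h ∧
      ∃ n : ℕ, |Gf t - (ξ.arg - 2 * π * n)| ≤ π * h := by
  have hπ3 := Real.pi_gt_three
  have hπ4 : π < 3.15 := Real.pi_lt_d2
  obtain ⟨h0t, htπ⟩ := ht
  have hsin : 0 < Real.sin (t / 2) := sin_half_pos h0t htπ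
  have hrep := phi2_exp hsin.ne'
  have hcos0 : 0 ≤ Real.cos (t / 2) :=
    Real.cos_nonneg_of_mem_Icc ⟨by linarith [Real.pi_pos], by linarith⟩
  have habsφ : ‖phi2 (Complex.exp ((t : ℂ) * Complex.I))‖ = Real.cos (t / 2) := by
    rw [hrep, norm_mul, Complex.norm_exp_ofReal_mul_I, mul_one, Complex.norm_real, Real.norm_eq_abs,
      abs_of_nonneg hcos0]
  have hcosgt : 1 - h < Real.cos (t / 2) := by
    have h1 : |‖phi2 (Complex.exp ((t : ℂ) * Complex.I))‖ - ‖ξ‖|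
        ≤ ‖phi2 (Complex.exp ((t : ℂ) * Complex.I)) - ξ‖ := by
      simpa using
        abs_norm_sub_norm_le (phi2 (Complex.exp ((t : ℂ) * Complex.I))) ξ
    rw [hξ, habsφ] at h1
    have h2 := (abs_lt.mp (h1.trans_lt hc)).1
    linarith
  constructor
  · -- t ≤ 5√h
    have hq : Real.cos (t / 2) ≤ 1 - 2 / π ^ 2 * (t / 2) ^ 2 :=
      Real.cos_le_one_sub_mul_cos_sq (by rw [abs_of_nonneg (by linarith : (0:ℝ) ≤ t/2)]; linarith)
    have ht2 : t ^ 2 ≤ 25 * h := by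
      have : 2 / π ^ 2 * (t / 2) ^ 2 < h := by linarith
      have hπ2 : π ^ 2 < 10 := by nlinarith
      rw [div_mul_eq_mul_div, div_lt_iff₀ (by positivity)] at this
      nlinarith
    have : t ≤ Real.sqrt (25 * h) := by
      rw [← Real.sqrt_sq h0t.le]
      exact Real.sqrt_le_sqrt ht2
    rwa [show (25 : ℝ) * h = 5 ^ 2 * h by norm_num, Real.sqrt_mul (by norm_num),
      Real.sqrt_sq (by norm_num : (0:ℝ) ≤ 5)] at this
  · -- angular
    set α := ξ.arg with hα
    have hξeq : ξ = Complex.exp ((α : ℂ) * Complex.I) := by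
      have := Complex.norm_mul_exp_arg_mul_I ξ
      rw [hξ] at this
      simpa using this.symm
    have hdiff : ‖Complex.exp ((Gf t : ℂ) * Complex.I) - ξ‖ < 2 * h := by
      have hsplit : Complex.exp ((Gf t : ℂ) * Complex.I) - ξ
          = (phi2 (Complex.exp ((t : ℂ) * Complex.I)) - ξ)
            + ((1 : ℂ) - (Real.cos (t / 2) : ℂ)) * Complex.exp ((Gf t : ℂ) * Complex.I) := by
        rw [hrep]; ring
      rw [hsplit]
      calc ‖_‖ ≤ ‖phi2 (Complex.exp ((t : ℂ) * Complex.I)) - ξ‖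
            + ‖((1 : ℂ) - (Real.cos (t / 2) : ℂ))
              * Complex.exp ((Gf t : ℂ) * Complex.I)‖ := norm_add_le _ _
        _ < 2 * h := by
            have he : ‖((1 : ℂ) - (Real.cos (t / 2) : ℂ))
                * Complex.exp ((Gf t : ℂ) * Complex.I)‖ = 1 - Real.cos (t / 2) := by
              rw [norm_mul, Complex.norm_exp_ofReal_mul_I, mul_one,
                show (1 : ℂ) - (Real.cos (t / 2) : ℂ) = ((1 - Real.cos (t / 2) : ℝ) : ℂ) by
                  push_cast; ring,
                Complex.norm_real, Real.norm_eq_abs, abs_of_nonneg (by linarith [Real.cos_le_one (t/2)])]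
            rw [he]
            linarith
    rw [hξeq, abs_exp_sub_exp (Gf t) α] at hdiff
    have hsinb : |Real.sin ((Gf t - α) / 2)| ≤ h := by linarith
    obtain ⟨k, hk⟩ := near_multiple hh.le hsinb
    have hk' : |Gf t - α - 2 * π * k| ≤ π * h := by
      have : |(Gf t - α) / 2 - k * π| * 2 ≤ π / 2 * h * 2 :=
        mul_le_mul_of_nonneg_right hk (by norm_num)
      rw [← abs_of_pos (by norm_num : (0:ℝ) < 2), ← abs_mul] at this
      rw [abs_of_pos (by norm_num : (0:ℝ) < 2)] at this
      calc |Gf t - α - 2 * π * k| = |((Gf t - α) / 2 - k * π) * 2| := by ring_nf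
        _ ≤ π * h := by linarith
    -- k ≤ 0
    have hGle : Gf t ≤ π / 2 := by
      have := Gf_le_half h0t htπ
      linarith
    have hαlb : -π < α := Complex.neg_pi_lt_arg ξ
    have hkle : k ≤ 0 := by
      by_contra hk0
      push_neg at hk0
      have hk1 : (1 : ℝ) ≤ (k : ℝ) := by exact_mod_cast hk0
      have := abs_le.mp hk'
      nlinarith [this.1]
    refine ⟨(-k).toNat, ?_⟩
    have : (((-k).toNat : ℤ) : ℝ) = -(k : ℝ) := by
      rw [Int.toNat_of_nonneg (by omega)]; push_cast; ring
    have hcast : ((((-k).toNat : ℕ) : ℝ)) = -(k : ℝ) := by exact_mod_cast this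
    rw [hcast]
    calc |Gf t - (α - 2 * π * -(k:ℝ))| = |Gf t - α - 2 * π * k| := by ring_nf
      _ ≤ π * h := hk'

lemma tail_bound {α h t : ℝ} {n : ℕ} (hn : 1 ≤ n) (hα : α ≤ π) (hh : 0 < h) (hh2 : h ≤ 1/100)
    (h0t : 0 < t) (ht1 : t ≤ 1) (habs : |Gf t - (α - 2 * π * n)| ≤ π * h) : t ≤ 2 / n := by
  have hG := Gf_lower h0t ht1
  have h1 := (abs_le.mp habs).2
  have hn1 : (1 : ℝ) ≤ (n : ℝ) := by exact_mod_cast hn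
  have hπ3 := Real.pi_gt_three
  have hπ4 : π < 3.15 := Real.pi_lt_d2
  have h4 : 2 * π * (n:ℝ) - α - π * h ≤ 2 / t := by linarith
  have h5 : (n : ℝ) ≤ 2 / t := by nlinarith
  rw [le_div_iff₀ (by positivity : (0:ℝ) < (n:ℝ))]
  calc t * (n:ℝ) ≤ t * (2 / t) := mul_le_mul_of_nonneg_left h5 h0t.le
    _ = 2 := by field_simp

lemma half_bound {ξ : ℂ} (hξ : ‖ξ‖ = 1) {h : ℝ} (hh : 0 < h) (hh2 : h ≤ 1/100) :
    volume {t : ℝ | t ∈ Ioc 0 π ∧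
        ‖phi2 (Complex.exp ((t : ℂ) * Complex.I)) - ξ‖ < h}
      ≤ ENNReal.ofReal (110 * (h * Real.sqrt h)) := by
  have hπ3 := Real.pi_gt_three
  have hπ4 : π < 3.15 := Real.pi_lt_d2
  set sh := Real.sqrt h with hsh
  have hsh0 : 0 < sh := Real.sqrt_pos.mpr hh
  have hsh2 : sh * sh = h := Real.mul_self_sqrt hh.le
  have hsh10 : sh ≤ 1 / 10 := by
    rw [hsh, show (1:ℝ)/10 = Real.sqrt (1/100) by
      rw [show (1:ℝ)/100 = (1/10)^2 by norm_num, Real.sqrt_sq]; norm_num]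
    exact Real.sqrt_le_sqrt hh2
  have hhsh : h ≤ sh / 10 := by nlinarith
  set δ : ℝ := 5 * sh with hδdef
  have hδ0 : 0 < δ := by positivity
  have hδhalf : δ ≤ 1 / 2 := by rw [hδdef]; linarith
  set α := ξ.arg with hα
  have hαπ : α ≤ π := Complex.arg_le_pi ξ
  set N : ℕ := ⌊1 / sh⌋₊ + 2 with hN
  set M : ℕ := ⌊2 / (h * sh)⌋₊ + N with hM
  have hN2 : (2 : ℕ) ≤ N := by omega
  have hNM : N ≤ M := by omega
  have hNreal : (N : ℝ) ≤ 1 / sh + 2 := by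
    rw [hN]; push_cast
    have := Nat.floor_le (by positivity : (0:ℝ) ≤ 1 / sh)
    linarith
  have hNlow : 1 / sh ≤ (N : ℝ) - 1 := by
    rw [hN]; push_cast
    have := (Nat.lt_floor_add_one (1 / sh)).le
    linarith
  have hMreal : 2 / (h * sh) ≤ (M : ℝ) := by
    rw [hM]; push_cast
    have := (Nat.lt_floor_add_one (2 / (h * sh))).le
    have h2 : (2:ℝ) ≤ (N:ℝ) := by exact_mod_cast hN2
    linarith
  have hM0 : (0:ℝ) < (M : ℝ) := lt_of_lt_of_le (by positivity) hMreal
  set E : ℕ → Set ℝ := fun n => {t : ℝ | t ∈ Ioc 0 δ ∧ |Gf t - (α - 2 * π * n)| ≤ π * h}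
    with hE
  -- covering
  have hcover : {t : ℝ | t ∈ Ioc 0 π ∧
      ‖phi2 (Complex.exp ((t : ℂ) * Complex.I)) - ξ‖ < h}
      ⊆ (⋃ n ∈ Finset.range M, E n) ∪ Ioc 0 (2 / M) := by
    rintro t ⟨htIoc, hc⟩
    obtain ⟨ht5, n, hn⟩ := localization hξ hh hh2 htIoc hc
    have htδ : t ∈ Ioc 0 δ := ⟨htIoc.1, by rw [hδdef, hsh]; exact ht5⟩
    by_cases hnM : n < M
    · left
      exact Set.mem_biUnion (Finset.mem_range.mpr hnM) ⟨htδ, hn⟩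
    · right
      push_neg at hnM
      have hn1 : 1 ≤ n := le_trans (by omega) hnM
      have ht2n : t ≤ 2 / n :=
        tail_bound hn1 hαπ hh hh2 htIoc.1 (htδ.2.trans (by linarith)) hn
      refine ⟨htIoc.1, ht2n.trans ?_⟩
      apply div_le_div_of_nonneg_left (by norm_num) (by positivity)
      exact_mod_cast hnM
  -- bounds on E n
  have hEbound : ∀ n ∈ Finset.range M, volume (E n) ≤
      ENNReal.ofReal (if n < N then π * h * δ ^ 2 else π * h * (2 / n) ^ 2) := by
    intro n hnr
    by_cases hcase : n < N
    · rw [if_pos hcase]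
      exact E_vol hδ0 hδhalf hh hδ0.le (fun t ht _ => ht.2)
    · rw [if_neg hcase]
      push_neg at hcase
      have hn1 : 1 ≤ n := le_trans (by omega) hcase
      refine E_vol hδ0 hδhalf hh (by positivity) ?_
      intro t ht habs
      exact tail_bound hn1 hαπ hh hh2 ht.1 (ht.2.trans (by linarith)) habs
  -- sum of bounds
  have hsum : (∑ n ∈ Finset.range M,
        ENNReal.ofReal (if n < N then π * h * δ ^ 2 else π * h * (2 / n) ^ 2))
      = ENNReal.ofReal (∑ n ∈ Finset.range M,
          if n < N then π * h * δ ^ 2 else π * h * (2 / n) ^ 2) := by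
    rw [ENNReal.ofReal_sum_of_nonneg]
    intro n _
    split <;> positivity
  -- real sum estimate
  have hreal : (∑ n ∈ Finset.range M,
      if n < N then π * h * δ ^ 2 else π * h * (2 / n) ^ 2) ≤ 109 * (h * sh) := by
    rw [Finset.range_eq_Ico, ← Finset.sum_Ico_consecutive _ (Nat.zero_le N) hNM]
    have hfirst : (∑ n ∈ Finset.Ico 0 N,
        if n < N then π * h * δ ^ 2 else π * h * (2 / n) ^ 2) = N * (π * h * δ ^ 2) := by
      rw [Finset.sum_congr rfl (fun n hn => if_pos (Finset.mem_Ico.mp hn).2)]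
      rw [Finset.sum_const, Nat.card_Ico, Nat.sub_zero, nsmul_eq_mul]
    have hsecond : (∑ n ∈ Finset.Ico N M,
        if n < N then π * h * δ ^ 2 else π * h * (2 / n) ^ 2)
        ≤ 4 * π * h * ((N:ℝ) - 1)⁻¹ := by
      rw [Finset.sum_congr rfl (fun n hn => if_neg (by
        have := (Finset.mem_Ico.mp hn).1; omega))]
      have hterm : ∀ n ∈ Finset.Ico N M, π * h * (2 / (n:ℝ)) ^ 2
          ≤ 4 * π * h * (((n:ℝ) - 1)⁻¹ - ((n:ℝ))⁻¹) := by
        intro n hn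
        have hn2 : (2:ℝ) ≤ (n:ℝ) := by
          have := (Finset.mem_Ico.mp hn).1
          exact_mod_cast le_trans hN2 this
        have hkey : ((n:ℝ) - 1)⁻¹ - ((n:ℝ))⁻¹ = (((n:ℝ) - 1) * n)⁻¹ := by
          rw [inv_sub_inv (by linarith) (by linarith)]
          congr 1
          ring
        rw [hkey]
        have h1 : (2 / (n:ℝ)) ^ 2 = 4 * ((n:ℝ)^2)⁻¹ := by
          rw [div_pow, div_eq_mul_inv]
          norm_num
        rw [h1]
        have h2 : ((n:ℝ)^2)⁻¹ ≤ (((n:ℝ) - 1) * n)⁻¹ := by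
          apply inv_anti₀ (by nlinarith)
          nlinarith
        calc π * h * (4 * ((n:ℝ)^2)⁻¹) = 4 * π * h * ((n:ℝ)^2)⁻¹ := by ring
          _ ≤ 4 * π * h * (((n:ℝ) - 1) * n)⁻¹ := by
              apply mul_le_mul_of_nonneg_left h2 (by positivity)
      calc (∑ n ∈ Finset.Ico N M, π * h * (2 / (n:ℝ)) ^ 2)
          ≤ ∑ n ∈ Finset.Ico N M, 4 * π * h * (((n:ℝ) - 1)⁻¹ - ((n:ℝ))⁻¹) :=
            Finset.sum_le_sum hterm
        _ = 4 * π * h * ∑ n ∈ Finset.Ico N M, ((((n:ℝ) - 1)⁻¹) - (((n:ℝ))⁻¹)) := by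
            rw [Finset.mul_sum]
        _ ≤ 4 * π * h * ((N:ℝ) - 1)⁻¹ := by
            apply mul_le_mul_of_nonneg_left _ (by positivity)
            -- telescoping
            have htel : ∑ n ∈ Finset.Ico N M, ((((n:ℝ) - 1)⁻¹) - (((n:ℝ))⁻¹))
                = ((N:ℝ) - 1)⁻¹ - ((M:ℝ) - 1)⁻¹ := by
              rw [Finset.sum_Ico_eq_sum_range]
              have : ∀ i, ((((N + i : ℕ):ℝ)) - 1)⁻¹ - (((N + i : ℕ):ℝ))⁻¹
                  = (fun j => ((((N + j : ℕ):ℝ)) - 1)⁻¹) i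
                    - (fun j => ((((N + j : ℕ):ℝ)) - 1)⁻¹) (i + 1) := by
                intro i
                push_cast
                ring_nf
              rw [Finset.sum_congr rfl (fun i _ => this i), Finset.sum_range_sub']
              push_cast [Nat.add_sub_cancel' hNM]
              ring_nf
            rw [htel]
            have hM1 : (0:ℝ) < (M:ℝ) - 1 := by
              have : (2:ℝ) ≤ (M:ℝ) := by exact_mod_cast le_trans hN2 hNM
              linarith
            have : (0:ℝ) ≤ ((M:ℝ) - 1)⁻¹ := by positivity
            linarith
    have hNpos : (0:ℝ) < (N:ℝ) - 1 := by
      have : (2:ℝ) ≤ (N:ℝ) := by exact_mod_cast hN2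
      linarith
    have hinvN : ((N:ℝ) - 1)⁻¹ ≤ sh := by
      rw [inv_le_comm₀ hNpos hsh0, ← one_div]
      exact hNlow
    -- first piece estimate
    have hfirstest : (N:ℝ) * (π * h * δ ^ 2) ≤ 95 * (h * sh) := by
      have hδsq : δ ^ 2 = 25 * h := by rw [hδdef]; nlinarith
      rw [hδsq]
      have h1 : (N:ℝ) * (π * h * (25 * h)) ≤ (1/sh + 2) * (π * h * (25 * h)) := by
        apply mul_le_mul_of_nonneg_right hNreal (by positivity)
      have h2 : (1/sh + 2) * (π * h * (25 * h)) = 25 * π * (h * (h / sh)) + 50 * π * h^2 := by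
        field_simp
        ring
      have h3 : h / sh = sh := by
        rw [div_eq_iff hsh0.ne', hsh2]
      have h4 : h^2 ≤ (sh / 10) * h := by nlinarith
      rw [h3] at h2
      have e2 : 50*π*h^2 ≤ 5*π*(h*sh) := by
        nlinarith [mul_le_mul_of_nonneg_left h4 (show (0:ℝ) ≤ 50*π by positivity)]
      have e4 : 30*π*(h*sh) ≤ 95*(h*sh) := by
        nlinarith [mul_pos hh hsh0, hπ4]
      nlinarith [h1, h2, e2, e4]
    have hsecondest : 4 * π * h * ((N:ℝ) - 1)⁻¹ ≤ 13 * (h * sh) := by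
      have e5 : 4 * π * h * ((N:ℝ) - 1)⁻¹ ≤ 4 * π * h * sh := by
        apply mul_le_mul_of_nonneg_left hinvN (by positivity)
      nlinarith [mul_pos hh hsh0, hπ4, e5]
    rw [hfirst]
    nlinarith [hsecond, hfirstest, hsecondest, mul_pos hh hsh0]
  have h2M : ENNReal.ofReal (2 / (M:ℝ)) ≤ ENNReal.ofReal (h * sh) := by
    apply ENNReal.ofReal_le_ofReal
    rw [div_le_iff₀ hM0]
    calc (2:ℝ) = (h * sh) * (2 / (h * sh)) := by field_simp
      _ ≤ (h * sh) * M := by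
          apply mul_le_mul_of_nonneg_left hMreal (by positivity)
  -- assembly
  calc volume {t : ℝ | t ∈ Ioc 0 π ∧
        ‖phi2 (Complex.exp ((t : ℂ) * Complex.I)) - ξ‖ < h}
      ≤ volume ((⋃ n ∈ Finset.range M, E n) ∪ Ioc 0 (2 / M)) := measure_mono hcover
    _ ≤ volume (⋃ n ∈ Finset.range M, E n) + volume (Ioc 0 (2 / (M:ℝ))) := measure_union_le _ _
    _ ≤ (∑ n ∈ Finset.range M, volume (E n)) + ENNReal.ofReal (2 / (M:ℝ)) := by
        gcongr
        · exact measure_biUnion_finset_le _ _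
        · rw [Real.volume_Ioc, sub_zero]
    _ ≤ (∑ n ∈ Finset.range M,
          ENNReal.ofReal (if n < N then π * h * δ ^ 2 else π * h * (2 / n) ^ 2))
        + ENNReal.ofReal (h * sh) := by
        refine add_le_add ?_ h2M
        exact Finset.sum_le_sum (fun n hn => hEbound n hn)
    _ ≤ ENNReal.ofReal (109 * (h * sh)) + ENNReal.ofReal (h * sh) := by
        gcongr
        rw [hsum]
        exact ENNReal.ofReal_le_ofReal hreal
    _ ≤ ENNReal.ofReal (110 * (h * sh)) := by
        rw [← ENNReal.ofReal_add (by positivity) (by positivity)]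
        apply ENNReal.ofReal_le_ofReal
        linarith

lemma measurable_phi2 : Measurable phi2 := by
  apply Measurable.mul
  · exact (measurable_const.add measurable_id).div_const 2
  · exact Complex.continuous_exp.measurable.comp
      (((measurable_const.add measurable_id).neg).div (measurable_const.sub measurable_id))

lemma phi2_conj (z : ℂ) : phi2 ((starRingEnd ℂ) z) = (starRingEnd ℂ) (phi2 z) := by
  simp only [phi2, map_mul, map_div₀, map_add, map_sub, map_neg, map_one, map_ofNat,
    ← Complex.exp_conj]

theorem stmt_11 :
    (∀ w : ℂ, ‖w‖ = 1 → w ≠ 1 → ‖phi2 w‖ ≤ 1) ∧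
    ∃ C > (0 : ℝ), ∃ h₀ : ℝ, 0 < h₀ ∧ h₀ < 1 ∧
      ∀ ξ : ℂ, ‖ξ‖ = 1 → ∀ h : ℝ, 0 < h → h ≤ h₀ →
        circleMeasure {w : ℂ | w ≠ 1 ∧ ‖phi2 w - ξ‖ < h}
          ≤ ENNReal.ofReal (C * h ^ ((3 : ℝ) / 2)) := by
  constructor
  · exact fun w hw h1 => abs_phi2_le hw h1
  refine ⟨1000, by norm_num, 1/100, by norm_num, by norm_num, ?_⟩
  intro ξ hξ h hh hh2
  have hπ := Real.pi_pos
  set S : Set ℂ := {w : ℂ | w ≠ 1 ∧ ‖phi2 w - ξ‖ < h} with hS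
  have hfmeas : Measurable (fun t : ℝ => Complex.exp (t * Complex.I)) := by
    apply Complex.continuous_exp.measurable.comp
    exact (Complex.measurable_ofReal.mul_const _)
  have hSmeas : MeasurableSet S := by
    apply MeasurableSet.inter
    · exact (measurableSet_singleton (1 : ℂ)).compl
    · exact measurableSet_lt
        (continuous_norm.measurable.comp (measurable_phi2.sub_const ξ)) measurable_const
  rw [circleMeasure, Measure.smul_apply, Measure.map_apply hfmeas hSmeas,
    Measure.restrict_apply (hfmeas hSmeas)]
  set A : Set ℝ := {t : ℝ | t ∈ Ioc 0 π ∧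
    ‖phi2 (Complex.exp ((t : ℂ) * Complex.I)) - ξ‖ < h} with hA
  set A' : Set ℝ := {t : ℝ | t ∈ Ioc 0 π ∧
    ‖phi2 (Complex.exp ((t : ℂ) * Complex.I)) - (starRingEnd ℂ) ξ‖ < h} with hA'
  have hsplit : (fun t : ℝ => Complex.exp (t * Complex.I)) ⁻¹' S ∩ Ioc 0 (2 * π)
      ⊆ A ∪ (fun t : ℝ => 2 * π - t) ⁻¹' A' := by
    rintro t ⟨htS, ht0, ht2π⟩
    obtain ⟨htne, htabs⟩ := htS
    by_cases htπ : t ≤ π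
    · exact Or.inl ⟨⟨ht0, htπ⟩, htabs⟩
    · push_neg at htπ
      right
      have ht2 : t < 2 * π := by
        rcases lt_or_eq_of_le ht2π with h' | h'
        · exact h'
        · exfalso
          apply htne
          rw [h']
          show Complex.exp (((2 * π : ℝ) : ℂ) * Complex.I) = 1
          rw [show ((2 * π : ℝ) : ℂ) * Complex.I = 2 * ↑π * Complex.I by push_cast; ring]
          exact Complex.exp_two_pi_mul_I
      set u : ℝ := 2 * π - t with hu
      have huIoc : u ∈ Ioc 0 π := ⟨by simp [hu]; linarith, by simp [hu]; linarith⟩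
      have hconj : Complex.exp ((t : ℂ) * Complex.I)
          = (starRingEnd ℂ) (Complex.exp ((u : ℂ) * Complex.I)) := by
        rw [← Complex.exp_conj]
        have : (starRingEnd ℂ) ((u : ℂ) * Complex.I) = -(u : ℂ) * Complex.I := by
          simp [Complex.conj_I]
        rw [this]
        have ht_eq : (t : ℂ) * Complex.I = 2 * ↑π * Complex.I + -(u : ℂ) * Complex.I := by
          push_cast [hu]; ring
        rw [ht_eq, Complex.exp_add, Complex.exp_two_pi_mul_I, one_mul]
      have : ‖phi2 (Complex.exp ((u : ℂ) * Complex.I)) - (starRingEnd ℂ) ξ‖ < h := by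
        have heq : ‖phi2 (Complex.exp ((t : ℂ) * Complex.I)) - ξ‖
            = ‖phi2 (Complex.exp ((u : ℂ) * Complex.I)) - (starRingEnd ℂ) ξ‖ := by
          conv_lhs => rw [hconj, phi2_conj]
          rw [show (starRingEnd ℂ) (phi2 (Complex.exp ((u : ℂ) * Complex.I))) - ξ
              = (starRingEnd ℂ) (phi2 (Complex.exp ((u : ℂ) * Complex.I)) - (starRingEnd ℂ) ξ) by
            rw [map_sub, Complex.conj_conj], Complex.norm_conj]
        rw [← heq]
        exact htabs
      exact ⟨huIoc, this⟩
  have hA'meas : MeasurableSet A' := by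
    apply MeasurableSet.inter measurableSet_Ioc
    exact measurableSet_lt
      (continuous_norm.measurable.comp
        (((measurable_phi2.comp hfmeas)).sub_const _)) measurable_const
  have hmp : MeasurePreserving (fun t : ℝ => 2 * π - t) volume volume := by
    have := (measurePreserving_add_left (volume : Measure ℝ) (2 * π)).comp
      (Measure.measurePreserving_neg (volume : Measure ℝ))
    simpa [Function.comp_def, sub_eq_add_neg] using this
  have hvolA : volume A ≤ ENNReal.ofReal (110 * (h * Real.sqrt h)) := half_bound hξ hh hh2
  have hvolA' : volume ((fun t : ℝ => 2 * π - t) ⁻¹' A')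
      ≤ ENNReal.ofReal (110 * (h * Real.sqrt h)) := by
    rw [hmp.measure_preimage hA'meas.nullMeasurableSet]
    exact half_bound (by rw [Complex.norm_conj]; exact hξ) hh hh2
  have hvol : volume ((fun t : ℝ => Complex.exp (t * Complex.I)) ⁻¹' S ∩ Ioc 0 (2 * π))
      ≤ ENNReal.ofReal (220 * (h * Real.sqrt h)) := by
    calc volume ((fun t : ℝ => Complex.exp (t * Complex.I)) ⁻¹' S ∩ Ioc 0 (2 * π))
        ≤ volume (A ∪ (fun t : ℝ => 2 * π - t) ⁻¹' A') := measure_mono hsplit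
      _ ≤ volume A + volume ((fun t : ℝ => 2 * π - t) ⁻¹' A') := measure_union_le _ _
      _ ≤ ENNReal.ofReal (110 * (h * Real.sqrt h)) + ENNReal.ofReal (110 * (h * Real.sqrt h)) :=
          add_le_add hvolA hvolA'
      _ = ENNReal.ofReal (220 * (h * Real.sqrt h)) := by
          rw [← ENNReal.ofReal_add (by positivity) (by positivity)]
          congr 1
          ring
  have hrpow : h ^ ((3 : ℝ) / 2) = h * Real.sqrt h := by
    rw [show (3 : ℝ) / 2 = 1 + 1 / 2 by norm_num, Real.rpow_add hh, Real.rpow_one,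
      ← Real.sqrt_eq_rpow]
  calc (ENNReal.ofReal (2 * π))⁻¹
        * volume ((fun t : ℝ => Complex.exp (t * Complex.I)) ⁻¹' S ∩ Ioc 0 (2 * π))
      ≤ 1 * volume ((fun t : ℝ => Complex.exp (t * Complex.I)) ⁻¹' S ∩ Ioc 0 (2 * π)) := by
        apply mul_le_mul_left
        rw [ENNReal.inv_le_one]
        exact ENNReal.one_le_ofReal.mpr (by linarith [Real.pi_gt_three])
    _ = volume ((fun t : ℝ => Complex.exp (t * Complex.I)) ⁻¹' S ∩ Ioc 0 (2 * π)) := one_mul _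
    _ ≤ ENNReal.ofReal (220 * (h * Real.sqrt h)) := hvol
    _ ≤ ENNReal.ofReal (1000 * h ^ ((3 : ℝ) / 2)) := by
        apply ENNReal.ofReal_le_ofReal
        rw [hrpow]
        nlinarith [Real.sqrt_nonneg h, mul_nonneg hh.le (Real.sqrt_nonneg h)]
end

section
/- Let μ be a finite positive Borel measure on the open unit disk 𝔻 = {z ∈ ℂ : |z| < 1} and let f be holomorphic on 𝔻. For w ∈ 𝕋 define the maximal function M_f(w) = sup{ |f(z)| : z ∈ 𝔻, |w − z| < 3(1−|z|) }. Then for every h ∈ (0,1] and every t > 0, μ({z ∈ 𝔻 : |z| > 1−h and |f(z)| > t}) ≤ 2π · K_μ(h) · m({w ∈ 𝕋 : M_f(w) > t}), the inequality being understood in [0,∞] (K_μ(h) may be infinite). -/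
open MeasureTheory

/-- The Carleson window `W(ξ,h)`. -/
def carlesonWindow (ξ : ℂ) (h : ℝ) : Set ℂ :=
  {z : ℂ | ‖z‖ ≤ 1 ∧ 1 - h < ‖z‖ ∧
    |Complex.arg (z * (starRingEnd ℂ) ξ)| < h}

/-- `ρ_μ(h) = sup_{ξ ∈ 𝕋} μ(W(ξ,h))`. -/
noncomputable def rhoMu (μ : Measure ℂ) (h : ℝ) : ENNReal :=
  ⨆ ξ : {ξ : ℂ // ‖ξ‖ = 1}, μ (carlesonWindow (ξ : ℂ) h)

/-- `K_μ(h) = sup_{0 < t ≤ h} ρ_μ(t)/t`. -/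
noncomputable def KMu (μ : Measure ℂ) (h : ℝ) : ENNReal :=
  ⨆ t : {t : ℝ // t ∈ Set.Ioc 0 h}, rhoMu μ (t : ℝ) / ENNReal.ofReal (t : ℝ)

/-- The non-tangential maximal function
`M_f(w) = sup{|f(z)| : z ∈ 𝔻, |w − z| < 3(1−|z|)}`, valued in `[0,∞]`. -/
noncomputable def maxFun (f : ℂ → ℂ) (w : ℂ) : ENNReal :=
  ⨆ z : {z : ℂ // ‖z‖ < 1 ∧ ‖w - z‖ < 3 * (1 - ‖z‖)},
    ENNReal.ofReal ‖f (z : ℂ)‖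

lemma abs_exp_sub_exp_s12 (θ φ : ℝ) :
    ‖Complex.exp (θ*Complex.I) - Complex.exp (φ*Complex.I)‖ ≤ |θ - φ| := by
  have h1 : Complex.exp ((θ:ℂ)*Complex.I) - Complex.exp ((φ:ℂ)*Complex.I)
      = Complex.exp ((φ:ℂ)*Complex.I) * (Complex.exp (((θ-φ:ℝ):ℂ)*Complex.I) - 1) := by
    rw [mul_sub, ← Complex.exp_add, mul_one]; push_cast; ring_nf
  rw [h1, norm_mul, Complex.norm_exp_ofReal_mul_I, one_mul]
  set s := θ - φ with hs
  clear_value s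
  have h2 : Complex.exp ((s:ℂ)*Complex.I) - 1
      = ((Real.cos s - 1 : ℝ) : ℂ) + ((Real.sin s : ℝ) : ℂ)*Complex.I := by
    rw [Complex.exp_mul_I]; push_cast; ring
  rw [h2]
  have h3 : ‖((Real.cos s - 1 : ℝ):ℂ) + ((Real.sin s:ℝ):ℂ)*Complex.I‖ ^ 2
      = (Real.cos s - 1)^2 + Real.sin s ^ 2 := by
    rw [Complex.sq_norm, Complex.normSq_add_mul_I]
  have h4 : (Real.cos s - 1)^2 + Real.sin s^2 ≤ s^2 := by
    have h5 := Real.one_sub_sq_div_two_le_cos (x := s)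
    have hsc := Real.sin_sq_add_cos_sq s
    have hexp : (Real.cos s - 1)^2 + Real.sin s^2
        = (Real.sin s^2 + Real.cos s^2) + 1 - 2*Real.cos s := by ring
    rw [hexp, hsc]; linarith
  have h6 := norm_nonneg (((Real.cos s - 1 : ℝ):ℂ) + ((Real.sin s:ℝ):ℂ)*Complex.I)
  have h7 := abs_nonneg s
  nlinarith [sq_abs s]

lemma arg_pos_mul_exp {r ψ : ℝ} (hr : 0 < r) (hψ : ψ ∈ Set.Ioc (-Real.pi) Real.pi) :
    Complex.arg ((r:ℂ) * Complex.exp ((ψ:ℂ)*Complex.I)) = ψ := by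
  rw [Complex.exp_mul_I]
  push_cast
  exact Complex.arg_mul_cos_add_sin_mul_I hr hψ

lemma mem_window {z : ℂ} {ℓ φ θ : ℝ} (hz1 : ‖z‖ ≤ 1) (hz2 : 1 - ℓ < ‖z‖)
    (hz0 : 0 < ‖z‖)
    (hzθ : z = (‖z‖ : ℂ) * Complex.exp ((θ:ℂ)*Complex.I))
    (hθφ : |θ - φ| < ℓ) (hℓ : ℓ ≤ 1) :
    z ∈ carlesonWindow (Complex.exp ((φ:ℂ)*Complex.I)) ℓ := by
  refine ⟨hz1, hz2, ?_⟩
  have hconj : (starRingEnd ℂ) (Complex.exp ((φ:ℂ)*Complex.I))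
      = Complex.exp (((-φ:ℝ):ℂ)*Complex.I) := by
    rw [← Complex.exp_conj]
    congr 1
    simp [Complex.conj_I]
  have hmul : z * (starRingEnd ℂ) (Complex.exp ((φ:ℂ)*Complex.I))
      = (‖z‖ : ℂ) * Complex.exp (((θ - φ:ℝ):ℂ)*Complex.I) := by
    rw [hconj]
    conv_lhs => rw [hzθ]
    rw [mul_assoc, ← Complex.exp_add]
    push_cast
    ring_nf
  rw [hmul, arg_pos_mul_exp hz0 ⟨by cases abs_lt.mp hθφ; nlinarith [Real.pi_gt_three],
    by cases abs_lt.mp hθφ; nlinarith [Real.pi_gt_three]⟩]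
  exact hθφ

lemma window_bound {μ : Measure ℂ} {h ℓ : ℝ} (hℓ0 : 0 < ℓ) (hℓh : ℓ ≤ h) {ξ : ℂ}
    (hξ : ‖ξ‖ = 1) :
    μ (carlesonWindow ξ ℓ) ≤ KMu μ h * ENNReal.ofReal ℓ := by
  have h1 : μ (carlesonWindow ξ ℓ) ≤ rhoMu μ ℓ :=
    le_iSup (fun ξ : {ξ : ℂ // ‖ξ‖ = 1} => μ (carlesonWindow (ξ:ℂ) ℓ)) ⟨ξ, hξ⟩
  have h2 : rhoMu μ ℓ / ENNReal.ofReal ℓ ≤ KMu μ h :=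
    le_iSup (fun t : {t : ℝ // t ∈ Set.Ioc 0 h} => rhoMu μ (t:ℝ) / ENNReal.ofReal (t:ℝ))
      ⟨ℓ, hℓ0, hℓh⟩
  have h3 : rhoMu μ ℓ = rhoMu μ ℓ / ENNReal.ofReal ℓ * ENNReal.ofReal ℓ := by
    rw [ENNReal.div_mul_cancel (by simp [hℓ0]) (by simp)]
  calc μ (carlesonWindow ξ ℓ) ≤ rhoMu μ ℓ := h1
    _ = rhoMu μ ℓ / ENNReal.ofReal ℓ * ENNReal.ofReal ℓ := h3
    _ ≤ KMu μ h * ENNReal.ofReal ℓ := mul_le_mul_left h2 _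

lemma grid_index {a s θ : ℝ} {N : ℕ} (hs0 : 0 < s) (hθ1 : a < θ) (hθ2 : θ ≤ a + N*s) :
    ∃ k : ℕ, k < N ∧ |θ - (a + k*s + s/2)| ≤ s/2 := by
  set q : ℝ := (θ - a)/s with hq
  have hq0 : 0 < q := div_pos (by linarith) hs0
  have hqN : q ≤ N := by rw [hq, div_le_iff₀ hs0]; linarith
  set c : ℤ := ⌈q⌉ with hc
  have hc1 : 0 < c := Int.ceil_pos.mpr hq0
  have hcN : c ≤ (N:ℤ) := Int.ceil_le.mpr (by exact_mod_cast hqN)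
  refine ⟨(c-1).toNat, by omega, ?_⟩
  have hk : (((c-1).toNat : ℕ) : ℝ) = (c:ℝ) - 1 := by
    have h0 := Int.toNat_of_nonneg (by omega : (0:ℤ) ≤ c - 1)
    exact_mod_cast congrArg (Int.cast : ℤ → ℝ) h0
  have hub : q ≤ (c:ℝ) := Int.le_ceil q
  have hlb : ((c:ℝ) - 1) < q := by
    have h1 : (c - 1 : ℤ) < ⌈q⌉ := by omega
    exact_mod_cast Int.lt_ceil.mp h1
  have h1 : θ - a ≤ (c:ℝ)*s := by
    have := (div_le_iff₀ hs0).mp hub; linarith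
  have h2 : ((c:ℝ)-1)*s < θ - a := by
    have := (lt_div_iff₀ hs0).mp hlb; linarith
  rw [hk, abs_le]
  constructor <;> nlinarith

lemma exp_shift (x : ℝ) (n : ℤ) :
    Complex.exp (((x + 2*Real.pi*n : ℝ):ℂ) * Complex.I) = Complex.exp ((x:ℂ)*Complex.I) := by
  have h1 : ((x + 2*Real.pi*n : ℝ):ℂ) * Complex.I
      = (x:ℂ)*Complex.I + (n:ℂ)*(2*(Real.pi:ℂ)*Complex.I) := by push_cast; ring
  rw [h1, Complex.exp_add, Complex.exp_int_mul_two_pi_mul_I, mul_one]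

lemma maxFun_gt_open (f : ℂ → ℂ) (c : ENNReal) : IsOpen {w : ℂ | c < maxFun f w} := by
  have hrw : {w : ℂ | c < maxFun f w} =
      ⋃ (z : ℂ) (_ : ‖z‖ < 1) (_ : c < ENNReal.ofReal (‖f z‖)),
        Metric.ball z (3*(1 - ‖z‖)) := by
    ext w
    simp only [Set.mem_setOf_eq, Set.mem_iUnion, Metric.mem_ball, Complex.dist_eq]
    constructor
    · intro hw
      rw [maxFun, lt_iSup_iff] at hw
      obtain ⟨⟨z, hz1, hz2⟩, hz3⟩ := hw
      exact ⟨z, hz1, hz3, hz2⟩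
    · rintro ⟨z, hz1, hz3, hd⟩
      rw [maxFun, lt_iSup_iff]
      exact ⟨⟨z, hz1, hd⟩, hz3⟩
  rw [hrw]
  exact isOpen_iUnion fun z => isOpen_iUnion fun _ => isOpen_iUnion fun _ => Metric.isOpen_ball

lemma mem_S {f : ℂ → ℂ} {t : ℝ} (ht : 0 ≤ t) {z : ℂ} (hz1 : ‖z‖ < 1)
    (hz3 : t < ‖f z‖) {w : ℂ}
    (hw : ‖w - z‖ < 3*(1 - ‖z‖)) :
    ENNReal.ofReal t < maxFun f w := by
  rw [maxFun, lt_iSup_iff]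
  exact ⟨⟨z, hz1, hw⟩, (ENNReal.ofReal_lt_ofReal_iff (lt_of_le_of_lt ht hz3)).mpr hz3⟩

lemma mem_S_arc {f : ℂ → ℂ} {t : ℝ} (ht : 0 ≤ t) {z : ℂ} (hz1 : ‖z‖ < 1)
    (hz3 : t < ‖f z‖) {s : ℝ} (hs : |s| ≤ 1 - ‖z‖) :
    ENNReal.ofReal t < maxFun f (Complex.exp (((Complex.arg z + s : ℝ):ℂ) * Complex.I)) := by
  have hr : 0 < 1 - ‖z‖ := by linarith
  apply mem_S ht hz1 hz3
  set w := Complex.exp (((Complex.arg z + s : ℝ):ℂ) * Complex.I) with hw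
  set ξ := Complex.exp (((Complex.arg z : ℝ):ℂ) * Complex.I) with hξ
  have h1 : ‖w - ξ‖ ≤ |s| := by
    have h := abs_exp_sub_exp_s12 (Complex.arg z + s) (Complex.arg z)
    rwa [add_sub_cancel_left] at h
  have h2 : ‖ξ - z‖ = 1 - ‖z‖ := by
    have hz : z = (‖z‖ : ℂ) * ξ := (Complex.norm_mul_exp_arg_mul_I z).symm
    have : ξ - z = ((1 - ‖z‖ : ℝ):ℂ) * ξ := by
      conv_lhs => rw [hz]
      push_cast; ring
    rw [this, norm_mul, Complex.norm_real, Real.norm_eq_abs, hξ, Complex.norm_exp_ofReal_mul_I, mul_one,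
      abs_of_pos hr]
  calc ‖w - z‖ = ‖(w - ξ) + (ξ - z)‖ := by ring_nf
    _ ≤ ‖w - ξ‖ + ‖ξ - z‖ := norm_add_le _ _
    _ ≤ |s| + (1 - ‖z‖) := by rw [h2]; linarith
    _ < 3*(1 - ‖z‖) := by linarith

lemma circleMeasure_apply {S : Set ℂ} (hS : MeasurableSet S) :
    circleMeasure S = (ENNReal.ofReal (2*Real.pi))⁻¹ *
      volume ((fun θ : ℝ => Complex.exp ((θ:ℂ)*Complex.I)) ⁻¹' S ∩ Set.Ioc 0 (2*Real.pi)) := by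
  have hcont : Continuous (fun θ : ℝ => Complex.exp ((θ:ℂ)*Complex.I)) := by fun_prop
  rw [circleMeasure, Measure.smul_apply, smul_eq_mul,
    Measure.map_apply hcont.measurable hS,
    Measure.restrict_apply (hcont.measurable hS)]

lemma vol_periodic_Ioc {O : Set ℝ} (hO : MeasurableSet O)
    (hper : ∀ x : ℝ, x ∈ O ↔ x + 2*Real.pi ∈ O) {θ0 : ℝ} (h0 : 0 ≤ θ0) (h1 : θ0 < 2*Real.pi) :
    volume (O ∩ Set.Ioc θ0 (θ0 + 2*Real.pi)) = volume (O ∩ Set.Ioc 0 (2*Real.pi)) := by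
  have hpi := Real.pi_pos
  have hsplit1 : O ∩ Set.Ioc θ0 (θ0+2*Real.pi)
      = (O ∩ Set.Ioc θ0 (2*Real.pi)) ∪ (O ∩ Set.Ioc (2*Real.pi) (θ0+2*Real.pi)) := by
    rw [← Set.inter_union_distrib_left, Set.Ioc_union_Ioc_eq_Ioc (by linarith) (by linarith)]
  have hsplit2 : O ∩ Set.Ioc 0 (2*Real.pi)
      = (O ∩ Set.Ioc 0 θ0) ∪ (O ∩ Set.Ioc θ0 (2*Real.pi)) := by
    rw [← Set.inter_union_distrib_left, Set.Ioc_union_Ioc_eq_Ioc h0 (by linarith)]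
  have hkey : (fun x : ℝ => x + 2*Real.pi) ⁻¹' (O ∩ Set.Ioc (2*Real.pi) (θ0+2*Real.pi))
      = O ∩ Set.Ioc 0 θ0 := by
    ext x
    simp only [Set.mem_preimage, Set.mem_inter_iff, Set.mem_Ioc]
    rw [← hper x]
    constructor
    · rintro ⟨ha, hb, hc⟩; exact ⟨ha, by linarith, by linarith⟩
    · rintro ⟨ha, hb, hc⟩; exact ⟨ha, by linarith, by linarith⟩
  have hvol3 : volume (O ∩ Set.Ioc (2*Real.pi) (θ0+2*Real.pi)) = volume (O ∩ Set.Ioc 0 θ0) := by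
    rw [← hkey]
    exact (measure_preimage_add_right volume (2*Real.pi) _).symm
  have hd1 : Disjoint (O ∩ Set.Ioc θ0 (2*Real.pi)) (O ∩ Set.Ioc (2*Real.pi) (θ0+2*Real.pi)) :=
    ((Set.Ioc_disjoint_Ioc_of_le le_rfl).mono Set.inter_subset_right Set.inter_subset_right)
  have hd2 : Disjoint (O ∩ Set.Ioc 0 θ0) (O ∩ Set.Ioc θ0 (2*Real.pi)) :=
    ((Set.Ioc_disjoint_Ioc_of_le le_rfl).mono Set.inter_subset_right Set.inter_subset_right)
  rw [hsplit1, hsplit2, measure_union hd1 (hO.inter measurableSet_Ioc),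
    measure_union hd2 (hO.inter measurableSet_Ioc), hvol3]
  ring

lemma cover_bound {μ : Measure ℂ} {h ℓ : ℝ} (hℓ0 : 0 < ℓ) (hℓh : ℓ ≤ h) (F : Set ℂ) (N : ℕ)
    (φ : ℕ → ℝ)
    (hcov : ∀ z ∈ F, ∃ k, k < N ∧ z ∈ carlesonWindow (Complex.exp (((φ k : ℝ):ℂ)*Complex.I)) ℓ) :
    μ F ≤ N * (KMu μ h * ENNReal.ofReal ℓ) := by
  have hsub : F ⊆ ⋃ k ∈ Finset.range N, carlesonWindow (Complex.exp (((φ k:ℝ):ℂ)*Complex.I)) ℓ := by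
    intro z hz
    obtain ⟨k, hk, hmem⟩ := hcov z hz
    exact Set.mem_biUnion (Finset.mem_range.mpr hk) hmem
  calc μ F ≤ μ (⋃ k ∈ Finset.range N, carlesonWindow (Complex.exp (((φ k:ℝ):ℂ)*Complex.I)) ℓ) :=
        measure_mono hsub
    _ ≤ ∑ k ∈ Finset.range N, μ (carlesonWindow (Complex.exp (((φ k:ℝ):ℂ)*Complex.I)) ℓ) :=
        measure_biUnion_finset_le _ _
    _ ≤ ∑ _k ∈ Finset.range N, KMu μ h * ENNReal.ofReal ℓ :=
        Finset.sum_le_sum fun k _ => window_bound hℓ0 hℓh (Complex.norm_exp_ofReal_mul_I _)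
    _ = N * (KMu μ h * ENNReal.ofReal ℓ) := by
        rw [Finset.sum_const, Finset.card_range, nsmul_eq_mul]

set_option maxHeartbeats 2000000 in
theorem stmt_12 (μ : Measure ℂ) [IsFiniteMeasure μ]
    (hμ : μ (Metric.ball (0 : ℂ) 1)ᶜ = 0)
    (f : ℂ → ℂ) (hf : DifferentiableOn ℂ f (Metric.ball 0 1))
    (h : ℝ) (hh0 : 0 < h) (hh1 : h ≤ 1) (t : ℝ) (ht : 0 < t) :
    μ {z : ℂ | ‖z‖ < 1 ∧ 1 - h < ‖z‖ ∧ t < ‖f z‖}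
      ≤ ENNReal.ofReal (2 * Real.pi) * KMu μ h *
        circleMeasure {w : ℂ | ENNReal.ofReal t < maxFun f w} := by
  classical
  have hpi := Real.pi_pos
  have hpi3 := Real.pi_gt_three
  set S := {w : ℂ | ENNReal.ofReal t < maxFun f w} with hSdef
  have hSopen : IsOpen S := maxFun_gt_open f _
  set O : Set ℝ := (fun θ : ℝ => Complex.exp ((θ:ℂ)*Complex.I)) ⁻¹' S with hOdef
  have hOopen : IsOpen O := hSopen.preimage (by fun_prop)
  set E := {z : ℂ | ‖z‖ < 1 ∧ 1 - h < ‖z‖ ∧ t < ‖f z‖} with hEdef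
  set K := KMu μ h with hKdef
  have hEfacts : ∀ z ∈ E, 0 < ‖z‖ ∧ 0 < 1 - ‖z‖ ∧ 1 - ‖z‖ < h := by
    intro z hz
    obtain ⟨h1, h2, h3⟩ := hz
    exact ⟨by linarith, by linarith, by linarith⟩
  have hEO : ∀ z ∈ E, ∀ s : ℝ, |s| ≤ 1 - ‖z‖ → Complex.arg z + s ∈ O := by
    intro z hz s hs
    obtain ⟨h1, h2, h3⟩ := hz
    exact mem_S_arc (le_of_lt ht) h1 h3 hs
  rw [circleMeasure_apply hSopen.measurableSet]
  have h2πne : ENNReal.ofReal (2*Real.pi) ≠ 0 := by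
    simp only [ne_eq, ENNReal.ofReal_eq_zero, not_le]; linarith
  have h2πtop : ENNReal.ofReal (2*Real.pi) ≠ ⊤ := ENNReal.ofReal_ne_top
  suffices hmain : μ E ≤ K * volume (O ∩ Set.Ioc 0 (2*Real.pi)) by
    calc μ E ≤ K * volume (O ∩ Set.Ioc 0 (2*Real.pi)) := hmain
      _ = (ENNReal.ofReal (2*Real.pi) * (ENNReal.ofReal (2*Real.pi))⁻¹) *
            (K * volume (O ∩ Set.Ioc 0 (2*Real.pi))) := by
          rw [ENNReal.mul_inv_cancel h2πne h2πtop, one_mul]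
      _ = ENNReal.ofReal (2*Real.pi) * K *
            ((ENNReal.ofReal (2*Real.pi))⁻¹ * volume (O ∩ Set.Ioc 0 (2*Real.pi))) := by ring
  by_cases hall : ∀ θ : ℝ, θ ∈ O
  · -- Case 1 : O = univ
    have hOuniv : O = Set.univ := Set.eq_univ_of_forall hall
    have hvol : volume (O ∩ Set.Ioc 0 (2*Real.pi)) = ENNReal.ofReal (2*Real.pi) := by
      rw [hOuniv, Set.univ_inter, Real.volume_Ioc, sub_zero]
    rw [hvol]
    set N : ℕ := ⌊Real.pi/h⌋₊ + 1 with hNdef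
    have hN0 : 0 < N := Nat.succ_pos _
    have hNgt : Real.pi/h < N := by
      have := Nat.lt_floor_add_one (Real.pi/h)
      push_cast [hNdef]
      linarith
    have hNle : (N:ℝ) ≤ Real.pi/h + 1 := by
      have := Nat.floor_le (show (0:ℝ) ≤ Real.pi/h by positivity)
      push_cast [hNdef]
      linarith
    set s : ℝ := 2*Real.pi/N with hsdef
    have hNR : (0:ℝ) < N := by exact_mod_cast hN0
    have hs0 : 0 < s := by positivity
    have hs2h : s/2 < h := by
      rw [hsdef, div_div]
      rw [div_lt_iff₀ (by positivity)]
      rw [div_lt_iff₀ hh0] at hNgt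
      linarith
    have hcov : ∀ z ∈ E, ∃ k, k < N ∧
        z ∈ carlesonWindow (Complex.exp (((-Real.pi + k*s + s/2 : ℝ):ℂ)*Complex.I)) h := by
      intro z hz
      obtain ⟨hz0', hzr, hzrh⟩ := hEfacts z hz
      have hNs : (N:ℝ)*s = 2*Real.pi := by rw [hsdef]; field_simp
      obtain ⟨k, hk, hdist⟩ := grid_index (a := -Real.pi) (s := s) (N := N) hs0
        (Complex.neg_pi_lt_arg z) (by rw [hNs]; linarith [Complex.arg_le_pi z])
      refine ⟨k, hk, ?_⟩
      exact mem_window (le_of_lt hz.1) hz.2.1 hz0'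
        (Complex.norm_mul_exp_arg_mul_I z).symm (lt_of_le_of_lt hdist hs2h) hh1
    calc μ E ≤ N * (K * ENNReal.ofReal h) :=
          cover_bound hh0 le_rfl E N (fun k => -Real.pi + k*s + s/2) hcov
      _ = K * ((N:ENNReal) * ENNReal.ofReal h) := by ring
      _ = K * ENNReal.ofReal ((N:ℝ) * h) := by
          rw [ENNReal.ofReal_mul (by positivity), ENNReal.ofReal_natCast]
      _ ≤ K * ENNReal.ofReal (2*Real.pi) := by
          apply mul_le_mul_right
          apply ENNReal.ofReal_le_ofReal
          have h1 : (N:ℝ)*h ≤ (Real.pi/h + 1)*h := by nlinarith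
          have h2 : (Real.pi/h + 1)*h = Real.pi + h := by field_simp
          linarith
  · -- Case 2
    push_neg at hall
    obtain ⟨θb, hθb⟩ := hall
    have hOmem : ∀ (x : ℝ) (n : ℤ), (x + 2*Real.pi*n ∈ O) ↔ x ∈ O := by
      intro x n
      simp only [hOdef, Set.mem_preimage]
      rw [exp_shift x n]
    set θ0 : ℝ := θb - 2*Real.pi*⌊θb/(2*Real.pi)⌋ with hθ0def
    have hθ0mem : θ0 ∉ O := by
      intro hc
      apply hθb
      have h1 : θ0 + 2*Real.pi*(⌊θb/(2*Real.pi)⌋ : ℤ) = θb := by rw [hθ0def]; ring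
      rw [← h1]
      exact (hOmem θ0 _).mpr hc
    have hmulθ : 2*Real.pi*(θb/(2*Real.pi)) = θb := by field_simp
    have hθ0lb : 0 ≤ θ0 := by
      have h1 := Int.floor_le (θb/(2*Real.pi))
      have h2 : 2*Real.pi*(⌊θb/(2*Real.pi)⌋:ℝ) ≤ 2*Real.pi*(θb/(2*Real.pi)) :=
        mul_le_mul_of_nonneg_left h1 (by linarith)
      rw [hθ0def]
      linarith
    have hθ0ub : θ0 < 2*Real.pi := by
      have h1 := Int.lt_floor_add_one (θb/(2*Real.pi))
      have h2 : 2*Real.pi*(θb/(2*Real.pi)) < 2*Real.pi*((⌊θb/(2*Real.pi)⌋:ℝ) + 1) :=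
        mul_lt_mul_of_pos_left h1 (by linarith)
      rw [hθ0def]
      linarith
    have hθ1mem : θ0 + 2*Real.pi ∉ O := by
      intro hc
      apply hθ0mem
      have h1 : θ0 + 2*Real.pi = θ0 + 2*Real.pi*((1:ℤ):ℝ) := by norm_num
      rw [h1] at hc
      exact (hOmem θ0 1).mp hc
    set Θ : ℂ → ℝ := fun z => Complex.arg z + 2*Real.pi*((⌊(θ0 - Complex.arg z)/(2*Real.pi)⌋ + 1 : ℤ):ℝ)
      with hΘdef
    have hΘO : ∀ z ∈ E, ∀ s : ℝ, |s| ≤ 1 - ‖z‖ → Θ z + s ∈ O := by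
      intro z hz s hs
      have h1 : Θ z + s = (Complex.arg z + s) +
          2*Real.pi*((⌊(θ0 - Complex.arg z)/(2*Real.pi)⌋ + 1 : ℤ):ℝ) := by
        rw [hΘdef]; ring
      rw [h1]
      exact (hOmem _ _).mpr (hEO z hz s hs)
    have hΘmemO : ∀ z ∈ E, Θ z ∈ O := by
      intro z hz
      have := hΘO z hz 0 (by simp; linarith [(hEfacts z hz).2.1])
      simpa using this
    have hΘIoo : ∀ z ∈ E, Θ z ∈ Set.Ioo θ0 (θ0 + 2*Real.pi) := by
      intro z hz
      have hq := Int.floor_le ((θ0 - Complex.arg z)/(2*Real.pi))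
      have hq2 := Int.lt_floor_add_one ((θ0 - Complex.arg z)/(2*Real.pi))
      have hmul : 2*Real.pi*((θ0 - Complex.arg z)/(2*Real.pi)) = θ0 - Complex.arg z := by
        field_simp
    -- lower bound
      have hlb : θ0 < Θ z := by
        have h2 : 2*Real.pi*((θ0 - Complex.arg z)/(2*Real.pi)) <
            2*Real.pi*((⌊(θ0 - Complex.arg z)/(2*Real.pi)⌋:ℝ) + 1) :=
          mul_lt_mul_of_pos_left hq2 (by linarith)
        rw [hΘdef]
        push_cast
        push_cast at h2
        linarith
      have hub : Θ z ≤ θ0 + 2*Real.pi := by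
        have h2 : 2*Real.pi*(⌊(θ0 - Complex.arg z)/(2*Real.pi)⌋:ℝ) ≤
            2*Real.pi*((θ0 - Complex.arg z)/(2*Real.pi)) :=
          mul_le_mul_of_nonneg_left hq (by linarith)
        rw [hΘdef]
        push_cast
        push_cast at h2
        linarith
      refine ⟨hlb, lt_of_le_of_ne hub ?_⟩
      intro heq
      apply hθ1mem
      rw [← heq]
      exact hΘmemO z hz
    -- connected components
    set C : ℂ → Set ℝ := fun z => connectedComponentIn O (Θ z) with hCdef
    have hCopen : ∀ z, IsOpen (C z) := fun z => hOopen.connectedComponentIn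
    have hCmemΘ : ∀ z ∈ E, Θ z ∈ C z := fun z hz => mem_connectedComponentIn (hΘmemO z hz)
    have hCIcc : ∀ z ∈ E,
        Set.Icc (Θ z - (1 - ‖z‖)) (Θ z + (1 - ‖z‖)) ⊆ C z := by
      intro z hz
      apply IsPreconnected.subset_connectedComponentIn isPreconnected_Icc
      · exact ⟨by linarith [(hEfacts z hz).2.1], by linarith [(hEfacts z hz).2.1]⟩
      · intro y hy
        have h1 : y = Θ z + (y - Θ z) := by ring
        rw [h1]
        apply hΘO z hz
        obtain ⟨hy1, hy2⟩ := hy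
        rw [abs_le]
        constructor <;> linarith
    have hCsub : ∀ z ∈ E, C z ⊆ Set.Ioo θ0 (θ0 + 2*Real.pi) := by
      intro z hz y hy
      have hord : (C z).OrdConnected := isPreconnected_connectedComponentIn.ordConnected
      have hΘy := hΘIoo z hz
      constructor
      · by_contra hc
        push_neg at hc
        exact hθ0mem (connectedComponentIn_subset O (Θ z)
          (hord.out hy (hCmemΘ z hz) ⟨hc, le_of_lt hΘy.1⟩))
      · by_contra hc
        push_neg at hc
        exact hθ1mem (connectedComponentIn_subset O (Θ z)
          (hord.out (hCmemΘ z hz) hy ⟨le_of_lt hΘy.2, hc⟩))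
    -- enumeration of components by naturals
    set q : ℕ → ℝ := fun n => (((Denumerable.eqv ℚ).symm n : ℚ) : ℝ) with hqdef
    set R : ℂ → Set ℕ := fun z => {n : ℕ | q n ∈ C z} with hRdef
    have hRne : ∀ z ∈ E, (R z).Nonempty := by
      intro z hz
      obtain ⟨ε, hε, hball⟩ := Metric.isOpen_iff.mp (hCopen z) _ (hCmemΘ z hz)
      obtain ⟨r, hr1, hr2⟩ := exists_rat_btwn (show Θ z - ε < Θ z by linarith)
      refine ⟨Denumerable.eqv ℚ r, ?_⟩
      show q (Denumerable.eqv ℚ r) ∈ C z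
      have hqr : q (Denumerable.eqv ℚ r) = (r:ℝ) := by
        rw [hqdef]; simp only [Equiv.symm_apply_apply]
      rw [hqr]
      apply hball
      rw [Metric.mem_ball, Real.dist_eq, abs_lt]
      constructor <;> linarith
    set idx : ℂ → ℕ := fun z => sInf (R z) with hidxdef
    have hidxmem : ∀ z ∈ E, q (idx z) ∈ C z := fun z hz => Nat.sInf_mem (hRne z hz)
    set D : ℕ → Set ℝ := fun n => connectedComponentIn O (q n) with hDdef
    have hCD0 : ∀ z ∈ E, C z = D (idx z) := fun z hz => connectedComponentIn_eq (hidxmem z hz)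
    set En : ℕ → Set ℂ := fun n => {z | z ∈ E ∧ idx z = n} with hEndef
    have hEcover : E ⊆ ⋃ n, En n := fun z hz => Set.mem_iUnion.mpr ⟨idx z, hz, rfl⟩
    have hDC : ∀ n, ∀ z ∈ En n, C z = D n := by
      rintro n z ⟨hzE, hzidx⟩
      rw [← hzidx]
      exact hCD0 z hzE
    have hDsub : ∀ n, (En n).Nonempty → D n ⊆ Set.Ioo θ0 (θ0 + 2*Real.pi) := by
      rintro n ⟨z0, hz0⟩
      rw [← hDC n z0 hz0]
      exact hCsub z0 hz0.1
    have hDopen : ∀ n, IsOpen (D n) := fun n => hOopen.connectedComponentIn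
    set D' : ℕ → Set ℝ := fun n => if (En n).Nonempty then D n else ∅ with hD'def
    have hD'meas : ∀ n, MeasurableSet (D' n) := by
      intro n
      rw [hD'def]
      by_cases hne : (En n).Nonempty
      · simp only [if_pos hne]; exact (hDopen n).measurableSet
      · simp only [if_neg hne]; exact MeasurableSet.empty
    -- per-component bound
    have hper_n : ∀ n, μ (En n) ≤ K * volume (D' n) := by
      intro n
      by_cases hne : (En n).Nonempty
      swap
      · rw [Set.not_nonempty_iff_eq_empty] at hne
        rw [hne]
        simp
      have hD'eq : D' n = D n := by rw [hD'def]; simp only [if_pos hne]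
      rw [hD'eq]
      obtain ⟨z0, hz0⟩ := hne
      have hz0E : z0 ∈ E := hz0.1
      have hbddB : BddBelow (D n) := BddBelow.mono (hDsub n ⟨z0, hz0⟩) bddBelow_Ioo
      have hbddA : BddAbove (D n) := BddAbove.mono (hDsub n ⟨z0, hz0⟩) bddAbove_Ioo
      have hDne : (D n).Nonempty := ⟨Θ z0, by rw [← hDC n z0 hz0]; exact hCmemΘ z0 hz0E⟩
      have hstrict : ∀ z ∈ En n, sInf (D n) < Θ z - (1 - ‖z‖) ∧
          Θ z + (1 - ‖z‖) < sSup (D n) := by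
        intro z hz
        have hzE := hz.1
        have hIcc : Set.Icc (Θ z - (1 - ‖z‖)) (Θ z + (1 - ‖z‖)) ⊆ D n := by
          rw [← hDC n z hz]; exact hCIcc z hzE
        have hr := (hEfacts z hzE).2.1
        have hlo : Θ z - (1 - ‖z‖) ∈ D n := hIcc ⟨le_rfl, by linarith⟩
        have hhi : Θ z + (1 - ‖z‖) ∈ D n := hIcc ⟨by linarith, le_rfl⟩
        obtain ⟨ε1, hε1, hball1⟩ := Metric.isOpen_iff.mp (hDopen n) _ hlo
        obtain ⟨ε2, hε2, hball2⟩ := Metric.isOpen_iff.mp (hDopen n) _ hhi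
        have hm1 : Θ z - (1 - ‖z‖) - ε1/2 ∈ D n := by
          apply hball1
          rw [Metric.mem_ball, Real.dist_eq, abs_lt]
          constructor <;> linarith
        have hm2 : Θ z + (1 - ‖z‖) + ε2/2 ∈ D n := by
          apply hball2
          rw [Metric.mem_ball, Real.dist_eq, abs_lt]
          constructor <;> linarith
        have ha1 : sInf (D n) ≤ Θ z - (1 - ‖z‖) - ε1/2 := csInf_le hbddB hm1
        have hb1 : Θ z + (1 - ‖z‖) + ε2/2 ≤ sSup (D n) := le_csSup hbddA hm2
        exact ⟨lt_of_le_of_lt ha1 (sub_lt_self _ (by linarith)),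
          lt_of_lt_of_le (lt_add_of_pos_right _ (by linarith)) hb1⟩
      have hvolD : ENNReal.ofReal (sSup (D n) - sInf (D n)) ≤ volume (D n) := by
        have hIoosub : Set.Ioo (sInf (D n)) (sSup (D n)) ⊆ D n := by
          intro y hy
          obtain ⟨p, hp, hpy⟩ := (csInf_lt_iff hbddB hDne).mp hy.1
          obtain ⟨p', hp', hyp'⟩ := (lt_csSup_iff hbddA hDne).mp hy.2
          exact (isPreconnected_connectedComponentIn.ordConnected.out hp hp')
            ⟨le_of_lt hpy, le_of_lt hyp'⟩
        calc ENNReal.ofReal (sSup (D n) - sInf (D n))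
            = volume (Set.Ioo (sInf (D n)) (sSup (D n))) := by rw [Real.volume_Ioo]
          _ ≤ volume (D n) := measure_mono hIoosub
      obtain ⟨a, hadef⟩ : ∃ a, a = sInf (D n) := ⟨_, rfl⟩
      obtain ⟨b, hbdef⟩ : ∃ b, b = sSup (D n) := ⟨_, rfl⟩
      rw [← hadef, ← hbdef] at hstrict hvolD
      clear hadef hbdef
      obtain ⟨hs1, hs2⟩ := hstrict z0 hz0
      have hr0 := (hEfacts z0 hz0E).2.1
      obtain ⟨L, hLdef⟩ : ∃ L, L = b - a := ⟨_, rfl⟩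
      have hL0 : 0 < L := by linarith
      obtain ⟨l, hldef⟩ : ∃ l, l = min (L/2) h := ⟨_, rfl⟩
      have hl0 : 0 < l := by rw [hldef]; exact lt_min (by linarith) hh0
      have hlh : l ≤ h := by rw [hldef]; exact min_le_right _ _
      have hlL : l ≤ L/2 := by rw [hldef]; exact min_le_left _ _
      obtain ⟨N, hNdef⟩ : ∃ N : ℕ, N = ⌊L/(2*l)⌋₊ + 1 := ⟨_, rfl⟩
      have hN0 : 0 < N := by rw [hNdef]; exact Nat.succ_pos _
      have hNR : (0:ℝ) < N := by exact_mod_cast hN0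
      have hNl : (N:ℝ)*l ≤ L := by
        have h1 := Nat.floor_le (show (0:ℝ) ≤ L/(2*l) from div_nonneg hL0.le (by linarith))
        have h2 : (N:ℝ) ≤ L/(2*l) + 1 := by rw [hNdef]; push_cast; linarith
        have h3 : (L/(2*l))*l = L/2 := by field_simp
        nlinarith
      obtain ⟨s, hsdef⟩ : ∃ s, s = L/N := ⟨_, rfl⟩
      have hs0 : 0 < s := by rw [hsdef]; exact div_pos hL0 hNR
      have hNs : (N:ℝ)*s = L := by rw [hsdef]; field_simp
      have hs2l : s < 2*l := by
        have h4 : L/(2*l) < (N:ℝ) := by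
          have h5 := Nat.lt_floor_add_one (L/(2*l))
          rw [hNdef]; push_cast; linarith
        rw [div_lt_iff₀ (by linarith : (0:ℝ) < 2*l)] at h4
        rw [hsdef, div_lt_iff₀ hNR]
        linarith
      have hcov : ∀ z ∈ En n, ∃ k, k < N ∧
          z ∈ carlesonWindow (Complex.exp (((a + k*s + s/2 : ℝ):ℂ)*Complex.I)) l := by
        intro z hz
        have hzE := hz.1
        obtain ⟨hza, hzb⟩ := hstrict z hz
        obtain ⟨hz0', hzr, hzrh⟩ := hEfacts z hzE
        have hrl : 1 - ‖z‖ < l := by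
          rw [hldef]
          exact lt_min (by linarith) (by linarith)
        obtain ⟨k, hk, hdist⟩ := grid_index (a := a) (s := s) (N := N) hs0
          (show a < Θ z by linarith) (by rw [hNs]; linarith)
        refine ⟨k, hk, ?_⟩
        have hzθ : z = (‖z‖ : ℂ) * Complex.exp (((Θ z:ℝ):ℂ)*Complex.I) := by
          conv_lhs => rw [← Complex.norm_mul_exp_arg_mul_I z]
          congr 1
          rw [hΘdef]
          exact (exp_shift (Complex.arg z) _).symm
        exact mem_window (le_of_lt hzE.1) (by linarith) hz0' hzθ
          (lt_of_le_of_lt hdist (by linarith)) (le_trans hlh hh1)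
      calc μ (En n) ≤ N * (K * ENNReal.ofReal l) :=
            cover_bound hl0 hlh _ N (fun k => a + k*s + s/2) hcov
        _ = K * ((N:ENNReal) * ENNReal.ofReal l) := by rw [mul_left_comm]
        _ = K * ENNReal.ofReal ((N:ℝ) * l) := by
            rw [ENNReal.ofReal_mul (by positivity), ENNReal.ofReal_natCast]
        _ ≤ K * ENNReal.ofReal (b - a) := by
            rw [← hLdef]
            exact mul_le_mul_right (ENNReal.ofReal_le_ofReal hNl) K
        _ ≤ K * volume (D n) := mul_le_mul_right hvolD K
    -- disjointness and summation
    have hdisj : Pairwise (Function.onFun Disjoint D') := by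
      intro n m hnm
      rw [Function.onFun]
      by_cases h1 : (En n).Nonempty
      swap
      · rw [hD'def]; simp only [if_neg h1]; exact Set.disjoint_left.mpr (by simp)
      by_cases h2 : (En m).Nonempty
      swap
      · rw [hD'def]; simp only [if_neg h2]; exact Set.disjoint_right.mpr (by simp)
      have hD'n : D' n = D n := by rw [hD'def]; simp only [if_pos h1]
      have hD'm : D' m = D m := by rw [hD'def]; simp only [if_pos h2]
      rw [hD'n, hD'm]
      by_contra hc
      rw [Set.not_disjoint_iff] at hc
      obtain ⟨x, hxn, hxm⟩ := hc
      obtain ⟨z1, hz1⟩ := h1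
      obtain ⟨z2, hz2⟩ := h2
      have e1 : D n = connectedComponentIn O x := connectedComponentIn_eq hxn
      have e2 : D m = connectedComponentIn O x := connectedComponentIn_eq hxm
      have eCC : C z1 = C z2 := by rw [hDC n z1 hz1, hDC m z2 hz2, e1, e2]
      have hRR : R z1 = R z2 := by
        rw [hRdef]
        ext k
        simp only [Set.mem_setOf_eq, eCC]
      have : idx z1 = idx z2 := by rw [hidxdef]; simp only [hRR]
      apply hnm
      rw [← hz1.2, ← hz2.2, this]
    have hUsub : (⋃ n, D' n) ⊆ O ∩ Set.Ioc θ0 (θ0 + 2*Real.pi) := by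
      intro y hy
      obtain ⟨n, hyn⟩ := Set.mem_iUnion.mp hy
      by_cases hne : (En n).Nonempty
      · have hD'n : D' n = D n := by rw [hD'def]; simp only [if_pos hne]
        rw [hD'n] at hyn
        exact ⟨connectedComponentIn_subset O _ hyn, Set.Ioo_subset_Ioc_self (hDsub n hne hyn)⟩
      · have hD'n : D' n = ∅ := by rw [hD'def]; simp only [if_neg hne]
        rw [hD'n] at hyn
        exact absurd hyn (Set.notMem_empty y)
    have hper1 : ∀ x : ℝ, x ∈ O ↔ x + 2*Real.pi ∈ O := by
      intro x
      have := hOmem x 1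
      constructor
      · intro hx
        have h1 : x + 2*Real.pi = x + 2*Real.pi*((1:ℤ):ℝ) := by norm_num
        rw [h1]
        exact this.mpr hx
      · intro hx
        apply this.mp
        have h1 : x + 2*Real.pi*((1:ℤ):ℝ) = x + 2*Real.pi := by norm_num
        rw [h1]
        exact hx
    calc μ E ≤ μ (⋃ n, En n) := measure_mono hEcover
      _ ≤ ∑' n, μ (En n) := measure_iUnion_le _
      _ ≤ ∑' n, K * volume (D' n) := ENNReal.tsum_le_tsum hper_n
      _ = K * ∑' n, volume (D' n) := ENNReal.tsum_mul_left
      _ = K * volume (⋃ n, D' n) := by rw [← measure_iUnion hdisj hD'meas]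
      _ ≤ K * volume (O ∩ Set.Ioc θ0 (θ0 + 2*Real.pi)) :=
          mul_le_mul_right (measure_mono hUsub) K
      _ = K * volume (O ∩ Set.Ioc 0 (2*Real.pi)) := by
          rw [vol_periodic_Ioc hOopen.measurableSet hper1 hθ0lb hθ0ub]
end

section
/- Let Ψ be an Orlicz function and μ a finite positive Borel measure on the closed unit disk {z ∈ ℂ : |z| ≤ 1}. The following are equivalent: (i) there exists A > 0 such that μ(W(ξ,h)) ≤ 1/Ψ(A·Ψ⁻¹(1/h)) for every ξ ∈ 𝕋 and every h ∈ (0,1) (μ is a Ψ-Carleson measure); (ii) there exists C > 0 such that the Luxemburg norm of u_{ξ,1−h} in L^Ψ(μ) satisfies ‖u_{ξ,1−h}‖_{L^Ψ(μ)} ≤ C/Ψ⁻¹(1/h) for every ξ ∈ 𝕋 and every h ∈ (0,1). -/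
open MeasureTheory

/-- The Luxemburg norm of a complex-valued function with respect to an Orlicz
function `Ψ` and a measure `μ`, with the convention `inf ∅ = ∞`. -/
noncomputable def luxNorm {α : Type*} [MeasurableSpace α] (Ψ : ℝ → ℝ)
    (μ : Measure α) (f : α → ℂ) : ENNReal :=
  sInf {C : ENNReal | ∃ c : ℝ, 0 < c ∧ C = ENNReal.ofReal c ∧
    (∫⁻ a, ENNReal.ofReal (Ψ (‖f a‖ / c)) ∂μ) ≤ 1}

/-- The function `u_{a,r}(z) = ((1-r)/(1 - conj(a)·r·z))²`. -/
noncomputable def uar (a : ℂ) (r : ℝ) (z : ℂ) : ℂ :=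
  (((1 : ℂ) - (r : ℂ)) / (1 - (starRingEnd ℂ) a * (r : ℂ) * z)) ^ 2

/-! ### Auxiliary lemmas on the Orlicz function -/

section aux
variable {Ψ Ψinv : ℝ → ℝ}

lemma psi_mono_le (hΨmono : StrictMonoOn Ψ (Set.Ici 0)) {a b : ℝ}
    (ha : 0 ≤ a) (hab : a ≤ b) : Ψ a ≤ Ψ b :=
  hΨmono.monotoneOn (Set.mem_Ici.mpr ha) (Set.mem_Ici.mpr (ha.trans hab)) hab

lemma psi_nonneg (hΨ0 : Ψ 0 = 0) (hΨmono : StrictMonoOn Ψ (Set.Ici 0)) {x : ℝ}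
    (hx : 0 ≤ x) : 0 ≤ Ψ x := by
  have := psi_mono_le hΨmono le_rfl hx; rwa [hΨ0] at this

lemma psi_pos (hΨ0 : Ψ 0 = 0) (hΨmono : StrictMonoOn Ψ (Set.Ici 0)) {x : ℝ}
    (hx : 0 < x) : 0 < Ψ x := by
  have := hΨmono (Set.mem_Ici.mpr le_rfl) (Set.mem_Ici.mpr hx.le) hx
  rwa [hΨ0] at this

lemma psi_le_reflect (hΨmono : StrictMonoOn Ψ (Set.Ici 0)) {a b : ℝ}
    (ha : 0 ≤ a) (hb : 0 ≤ b) (h : Ψ a ≤ Ψ b) : a ≤ b := by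
  by_contra hc
  push_neg at hc
  exact absurd (hΨmono (Set.mem_Ici.mpr hb) (Set.mem_Ici.mpr ha) hc) (not_lt.mpr h)

lemma psi_chord (hΨ0 : Ψ 0 = 0) (hΨconv : StrictConvexOn ℝ (Set.Ici 0) Ψ) {x y : ℝ}
    (hy : 0 ≤ y) (hx : 0 < x) (hyx : y ≤ x) : Ψ y ≤ y / x * Ψ x := by
  have hcv := hΨconv.convexOn
  have h1 : (0:ℝ) ∈ Set.Ici (0:ℝ) := Set.mem_Ici.mpr le_rfl
  have h2 : x ∈ Set.Ici (0:ℝ) := Set.mem_Ici.mpr hx.le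
  have ha : (0:ℝ) ≤ 1 - y / x := by
    have : y / x ≤ 1 := (div_le_one hx).mpr hyx
    linarith
  have hb : (0:ℝ) ≤ y / x := div_nonneg hy hx.le
  have hab : (1 - y / x) + y / x = 1 := by ring
  have := hcv.2 h1 h2 ha hb hab
  simp only [smul_eq_mul, mul_zero, zero_add, hΨ0] at this
  rw [div_mul_cancel₀ _ hx.ne'] at this
  linarith

lemma psiinv_scale (hΨ0 : Ψ 0 = 0) (hΨmono : StrictMonoOn Ψ (Set.Ici 0))
    (hΨconv : StrictConvexOn ℝ (Set.Ici 0) Ψ)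
    (hΨinv2 : ∀ y, 0 ≤ y → Ψ (Ψinv y) = y) (hΨinv0 : ∀ y, 0 ≤ y → 0 ≤ Ψinv y)
    {l t : ℝ} (hl0 : 0 ≤ l) (hl1 : l ≤ 1) (ht : 0 ≤ t) :
    l * Ψinv t ≤ Ψinv (l * t) := by
  rcases eq_or_lt_of_le (hΨinv0 t ht) with h0 | hpos
  · rw [← h0, mul_zero]; exact hΨinv0 _ (mul_nonneg hl0 ht)
  · have h1 : Ψ (l * Ψinv t) ≤ l * t := by
      have := psi_chord hΨ0 hΨconv (mul_nonneg hl0 hpos.le) hpos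
        (by nlinarith)
      rw [mul_div_assoc, div_self hpos.ne', mul_one, hΨinv2 t ht] at this
      exact this
    refine psi_le_reflect hΨmono (mul_nonneg hl0 hpos.le)
      (hΨinv0 _ (mul_nonneg hl0 ht)) ?_
    rw [hΨinv2 _ (mul_nonneg hl0 ht)]
    exact h1

lemma psiinv_pos (hΨ0 : Ψ 0 = 0) (hΨmono : StrictMonoOn Ψ (Set.Ici 0))
    (hΨinv2 : ∀ y, 0 ≤ y → Ψ (Ψinv y) = y) (hΨinv0 : ∀ y, 0 ≤ y → 0 ≤ Ψinv y)
    {t : ℝ} (ht : 0 < t) : 0 < Ψinv t := by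
  rcases eq_or_lt_of_le (hΨinv0 t ht.le) with h0 | hpos
  · exfalso
    have := hΨinv2 t ht.le
    rw [← h0, hΨ0] at this
    linarith
  · exact hpos

end aux

/-! ### Geometric lemmas -/

/-- The distance function `D(z) = |1 - conj(ξ)(1-h)z|`. -/
noncomputable def DD (ξ : ℂ) (h : ℝ) (z : ℂ) : ℝ :=
  ‖1 - (starRingEnd ℂ) ξ * (((1 - h : ℝ)) : ℂ) * z‖

lemma one_sub_abs_le' (v : ℂ) : 1 - ‖v‖ ≤ ‖1 - v‖ := by
  have := norm_add_le (1 - v) v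
  simp only [sub_add_cancel, norm_one] at this
  linarith

lemma abs_arg_le_im_div_re' {w : ℂ} (hre : 0 < w.re) : |w.arg| ≤ |w.im| / w.re := by
  have hlt : |w.arg| < Real.pi / 2 :=
    Complex.abs_arg_lt_pi_div_two_iff.mpr (Or.inl hre)
  rcases lt_trichotomy w.arg 0 with hneg | hz | hpos
  · have h1 : 0 < -w.arg := by linarith
    have h2 : -w.arg < Real.pi / 2 := by
      rw [abs_of_neg hneg] at hlt; exact hlt
    have h3' := Real.lt_tan h1 h2
    rw [Real.tan_neg, Complex.tan_arg] at h3'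
    rw [abs_of_neg hneg]
    have him : -(w.im / w.re) ≤ |w.im| / w.re := by
      rw [← neg_div]
      gcongr
      exact neg_le_abs _
    linarith
  · rw [hz]; simp [div_nonneg (abs_nonneg _) hre.le]
  · have h2 : w.arg < Real.pi / 2 := by rw [abs_of_pos hpos] at hlt; exact hlt
    have h3' := Real.lt_tan hpos h2
    rw [Complex.tan_arg] at h3'
    rw [abs_of_pos hpos]
    have him : w.im / w.re ≤ |w.im| / w.re := by
      gcongr
      exact le_abs_self _
    linarith

lemma abs_v (ξ z : ℂ) (hξ : ‖ξ‖ = 1) (r : ℝ) (hr : 0 ≤ r) :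
    ‖(starRingEnd ℂ) ξ * ((r : ℝ) : ℂ) * z‖ = r * ‖z‖ := by
  simp [norm_mul, Complex.norm_conj, hξ, Complex.norm_real, Real.norm_eq_abs, abs_of_nonneg hr]

lemma DD_ge (ξ z : ℂ) (hξ : ‖ξ‖ = 1) {h : ℝ} (h0 : 0 ≤ h) (h1 : h ≤ 1)
    (hz : ‖z‖ ≤ 1) : h ≤ DD ξ h z := by
  have h2 := one_sub_abs_le' ((starRingEnd ℂ) ξ * (((1 - h : ℝ)) : ℂ) * z)
  rw [abs_v ξ z hξ (1 - h) (by linarith)] at h2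
  have h3 : (1 - h) * ‖z‖ ≤ 1 - h := by
    nlinarith [norm_nonneg z]
  unfold DD
  linarith

lemma uar_abs (ξ z : ℂ) {h : ℝ} (h0 : 0 ≤ h) :
    ‖uar ξ (1 - h) z‖ = (h / DD ξ h z) ^ 2 := by
  unfold uar DD
  rw [norm_pow, norm_div]
  congr 2
  have : (1 : ℂ) - (((1 - h : ℝ)) : ℂ) = ((h : ℝ) : ℂ) := by push_cast; ring
  rw [this, Complex.norm_real, Real.norm_eq_abs, abs_of_nonneg h0]

lemma mem_window_of_DD_lt (ξ z : ℂ) (hξ : ‖ξ‖ = 1) {h s : ℝ}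
    (h0 : 0 < h) (h1 : h < 1) (hs4 : s ≤ 1 / 4) (hz : ‖z‖ ≤ 1)
    (hD : DD ξ h z < s) : z ∈ carlesonWindow ξ (2 * s) := by
  have hs0 : 0 < s := lt_of_lt_of_le h0 ((DD_ge ξ z hξ h0.le h1.le hz).trans hD.le)
  set v : ℂ := (starRingEnd ℂ) ξ * (((1 - h : ℝ)) : ℂ) * z with hv
  have hDd : ‖1 - v‖ < s := hD
  have habsv : ‖v‖ = (1 - h) * ‖z‖ :=
    abs_v ξ z hξ (1 - h) (by linarith)
  have hzlb : 1 - 2 * s < ‖z‖ := by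
    have h2 := one_sub_abs_le' v
    have h3 : (1 - h) * ‖z‖ ≤ ‖z‖ := by
      nlinarith [norm_nonneg z]
    rw [habsv] at h2
    linarith
  set w : ℂ := z * (starRingEnd ℂ) ξ with hw
  have hvw : v = (((1 - h : ℝ)) : ℂ) * w := by rw [hv, hw]; ring
  have hre1 : |(1 - v).re| ≤ ‖1 - v‖ := Complex.abs_re_le_norm _
  have him1 : |(1 - v).im| ≤ ‖1 - v‖ := Complex.abs_im_le_norm _
  have hre2 : (1 - v).re = 1 - v.re := by simp
  have him2 : (1 - v).im = -v.im := by simp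
  have hrev : 1 - s < v.re := by
    rw [hre2] at hre1
    have h4 := abs_lt.mp (lt_of_le_of_lt hre1 hDd)
    linarith [h4.1, h4.2]
  have himv : |v.im| < s := by
    rw [him2, abs_neg] at him1
    linarith
  have hrev' : (3:ℝ)/4 ≤ v.re := by linarith
  have hvre : v.re = (1 - h) * w.re := by
    rw [hvw]; simp [Complex.mul_re]
  have hvim : v.im = (1 - h) * w.im := by
    rw [hvw]; simp [Complex.mul_im]
  have hwre : 0 < w.re := by nlinarith
  have harg := abs_arg_le_im_div_re' hwre
  have hratio : |w.im| / w.re = |v.im| / v.re := by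
    rw [hvre, hvim, abs_mul, abs_of_pos (by linarith : (0:ℝ) < 1 - h)]
    rw [mul_div_mul_left _ _ (by linarith : (1:ℝ) - h ≠ 0)]
  have hargs : |w.arg| < 2 * s := by
    rw [hratio] at harg
    have hq : |v.im| / v.re < 2 * s := by
      rw [div_lt_iff₀ (by linarith)]
      nlinarith
    linarith
  exact ⟨hz, hzlb, hargs⟩

lemma DD_le_of_mem_window (ξ z : ℂ) (hξ : ‖ξ‖ = 1) {h : ℝ}
    (h0 : 0 < h) (h1 : h < 1) (hz : z ∈ carlesonWindow ξ h) : DD ξ h z ≤ 4 * h := by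
  obtain ⟨hz1, hz2, hz3⟩ := hz
  set w : ℂ := z * (starRingEnd ℂ) ξ with hw
  have habsw : ‖w‖ = ‖z‖ := by
    rw [hw, norm_mul, Complex.norm_conj, hξ, mul_one]
  have habs := Complex.norm_mul_exp_arg_mul_I w
  set θ : ℝ := w.arg with hθ
  set m : ℝ := ‖w‖ with hm
  have hdec : (1 : ℂ) - (starRingEnd ℂ) ξ * (((1 - h : ℝ)) : ℂ) * z
      = (((1 - (1 - h) * m : ℝ)) : ℂ)
        + (((1 - h : ℝ)) : ℂ) * ((m : ℝ) : ℂ) * (1 - Complex.exp (θ * Complex.I)) := by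
    have hzw : (starRingEnd ℂ) ξ * (((1 - h : ℝ)) : ℂ) * z = (((1 - h : ℝ)) : ℂ) * w := by
      rw [hw]; ring
    rw [hzw]
    push_cast
    linear_combination ((1 - h : ℂ)) * habs
  have hm1 : m ≤ 1 := by rw [habsw]; exact hz1
  have hm2 : 1 - h < m := by rw [habsw]; exact hz2
  have hθh : |θ| < h := hz3
  have hexp : ‖1 - Complex.exp (θ * Complex.I)‖ ≤ 2 * |θ| := by
    have h1' : ‖(θ : ℂ) * Complex.I‖ ≤ 1 := by
      rw [norm_mul, Complex.norm_I, mul_one, Complex.norm_real, Real.norm_eq_abs]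
      linarith
    have := Complex.norm_exp_sub_one_le h1'
    rw [norm_mul, Complex.norm_I, mul_one, Complex.norm_real, Real.norm_eq_abs] at this
    calc ‖1 - Complex.exp (θ * Complex.I)‖
        = ‖Complex.exp ((θ:ℂ) * Complex.I) - 1‖ := by
          rw [show (1:ℂ) - Complex.exp ((θ:ℂ) * Complex.I)
            = -(Complex.exp ((θ:ℂ) * Complex.I) - 1) by ring, norm_neg]
      _ ≤ 2 * |θ| := this
  unfold DD
  rw [hdec]
  calc ‖(((1 - (1 - h) * m : ℝ)) : ℂ)
        + (((1 - h : ℝ)) : ℂ) * ((m : ℝ) : ℂ) * (1 - Complex.exp (θ * Complex.I))‖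
      ≤ ‖((1 - (1 - h) * m : ℝ) : ℂ)‖
        + ‖(((1 - h : ℝ)) : ℂ) * ((m : ℝ) : ℂ) * (1 - Complex.exp (θ * Complex.I))‖ :=
        norm_add_le _ _
    _ ≤ (1 - (1 - h) * m) + 1 * 1 * (2 * |θ|) := by
        have hmn : (0:ℝ) ≤ m := by positivity
        have e1 : ‖((1 - (1 - h) * m : ℝ) : ℂ)‖ = 1 - (1 - h) * m := by
          rw [Complex.norm_real, Real.norm_eq_abs, abs_of_nonneg]; nlinarith
        rw [e1, norm_mul, norm_mul, Complex.norm_real, Real.norm_eq_abs, Complex.norm_real, Real.norm_eq_abs,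
          abs_of_nonneg (by linarith : (0:ℝ) ≤ 1 - h), abs_of_nonneg hmn]
        have hms := norm_nonneg (1 - Complex.exp ((θ:ℝ) * Complex.I))
        have hle1 : (1 - h) * m ≤ 1 := by nlinarith
        have h5 := mul_le_mul_of_nonneg_right hle1 hms
        rw [one_mul] at h5
        have : (1 - h) * m * ‖1 - Complex.exp ((θ:ℝ) * Complex.I)‖ ≤ 1 * 1 * (2 * |θ|) := by
          rw [one_mul, one_mul]
          exact h5.trans hexp
        linarith
    _ ≤ 4 * h := by nlinarith [abs_nonneg θ]

lemma exists_dyadic {x : ℝ} (hx : 1 ≤ x) : ∃ n : ℕ, (2:ℝ)^n ≤ x ∧ x < 2^(n+1) := by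
  have hfl : 1 ≤ ⌊x⌋₊ := Nat.le_floor (by exact_mod_cast hx)
  refine ⟨Nat.log 2 ⌊x⌋₊, ?_, ?_⟩
  · have h1 : (2:ℕ)^(Nat.log 2 ⌊x⌋₊) ≤ ⌊x⌋₊ := Nat.pow_log_le_self 2 (by omega)
    calc ((2:ℝ))^(Nat.log 2 ⌊x⌋₊) = (((2:ℕ)^(Nat.log 2 ⌊x⌋₊) : ℕ) : ℝ) := by push_cast; ring
      _ ≤ (⌊x⌋₊ : ℝ) := by exact_mod_cast h1
      _ ≤ x := Nat.floor_le (by linarith)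
  · have h2 : ⌊x⌋₊ < 2^(Nat.log 2 ⌊x⌋₊ + 1) := Nat.lt_pow_succ_log_self (by norm_num) _
    have h3 : (⌊x⌋₊ : ℝ) + 1 ≤ ((2:ℝ))^(Nat.log 2 ⌊x⌋₊ + 1) := by
      have : (⌊x⌋₊ + 1 : ℕ) ≤ 2^(Nat.log 2 ⌊x⌋₊ + 1) := h2
      calc (⌊x⌋₊ : ℝ) + 1 = ((⌊x⌋₊ + 1 : ℕ) : ℝ) := by push_cast; ring
        _ ≤ (((2:ℕ)^(Nat.log 2 ⌊x⌋₊ + 1) : ℕ) : ℝ) := by exact_mod_cast this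
        _ = ((2:ℝ))^(Nat.log 2 ⌊x⌋₊ + 1) := by push_cast; ring
    calc x < ⌊x⌋₊ + 1 := Nat.lt_floor_add_one x
      _ ≤ ((2:ℝ))^(Nat.log 2 ⌊x⌋₊ + 1) := h3

section realbounds
variable {Ψ : ℝ → ℝ}
lemma head_real_bound (hΨ0 : Ψ 0 = 0) (hΨmono : StrictMonoOn Ψ (Set.Ici 0))
    (hΨconv : StrictConvexOn ℝ (Set.Ici 0) Ψ)
    {a M Cc A y K : ℝ} (ha0 : 0 < a) (ha1 : a ≤ 1) (hM : 0 < M) (hCc0 : 0 < Cc)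
    (hA : 0 < A) (hy : a / 4 * M ≤ y) (hACc : 16 ≤ A * Cc) (hK : 4 / (Cc * A) ≤ K) :
    Ψ (a * a * M / Cc) * (1 / Ψ (A * y)) ≤ a * K := by
  have hy0 : 0 < y := lt_of_lt_of_le (by positivity) hy
  have hx0 : 0 < A * y := by positivity
  have hb0 : (0:ℝ) ≤ a * a * M / Cc := by positivity
  have hble : a * a * M / Cc ≤ A * y := by
    have h1' : a * a * M / Cc ≤ A * (a / 4 * M) := by
      rw [div_le_iff₀ hCc0]
      have hq1 : a * a * M ≤ a * M := by
        have haa1 : a * a ≤ a := mul_le_of_le_one_right ha0.le ha1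
        have := mul_le_mul_of_nonneg_right haa1 hM.le
        linarith
      have hq2 : 16 * (a * M) ≤ (A * Cc) * (a * M) :=
        mul_le_mul_of_nonneg_right hACc (mul_nonneg ha0.le hM.le)
      have hq3 : A * (a / 4 * M) * Cc = (A * Cc) * (a * M) / 4 := by ring
      rw [hq3]
      linarith [mul_nonneg ha0.le hM.le]
    exact h1'.trans (mul_le_mul_of_nonneg_left hy hA.le)
  have hΨx : 0 < Ψ (A * y) := psi_pos hΨ0 hΨmono hx0
  have hchord := psi_chord hΨ0 hΨconv hb0 hx0 hble
  have e1 : Ψ (a * a * M / Cc) * (1 / Ψ (A * y)) ≤ (a * a * M / Cc) / (A * y) := by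
    have h2' := mul_le_mul_of_nonneg_right hchord
      (le_of_lt (by positivity : (0:ℝ) < 1 / Ψ (A * y)))
    calc Ψ (a * a * M / Cc) * (1 / Ψ (A * y))
        ≤ (a * a * M / Cc) / (A * y) * Ψ (A * y) * (1 / Ψ (A * y)) := h2'
      _ = (a * a * M / Cc) / (A * y) := by field_simp
  have e2 : (a * a * M / Cc) / (A * y) ≤ (a * a * M / Cc) / (A * (a / 4 * M)) := by
    gcongr
  have e3 : (a * a * M / Cc) / (A * (a / 4 * M)) = a * (4 / (Cc * A)) := by
    field_simp
  have e4 : a * (4 / (Cc * A)) ≤ a * K := mul_le_mul_of_nonneg_left hK ha0.le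
  linarith

lemma tail_real_bound (hΨ0 : Ψ 0 = 0) (hΨmono : StrictMonoOn Ψ (Set.Ici 0))
    (hΨconv : StrictConvexOn ℝ (Set.Ici 0) Ψ)
    {a M Cc I1 μt K : ℝ} (ha0 : 0 < a) (ha1 : a ≤ 1) (hM : 0 < M) (hCc0 : 0 < Cc)
    (hμt0 : 0 ≤ μt) (hI1 : 0 ≤ I1)
    (haM : a * M ≤ 8 * I1) (hCclb : 8 * I1 ≤ Cc)
    (hK : 8 * I1 * Ψ 1 * μt / Cc ≤ K) :
    Ψ (a * a * M / Cc) * μt ≤ a * K := by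
  have hΨ1 : 0 < Ψ 1 := psi_pos hΨ0 hΨmono one_pos
  have hb0 : (0:ℝ) ≤ a * a * M / Cc := by positivity
  have hble1 : a * a * M ≤ a * (8 * I1) := by
    have : a * (a * M) ≤ a * (8 * I1) := mul_le_mul_of_nonneg_left haM ha0.le
    linarith [this]
  have hb1 : a * a * M / Cc ≤ 1 := by
    rw [div_le_one hCc0]
    have h2' : a * (8 * I1) ≤ 1 * (8 * I1) :=
      mul_le_mul_of_nonneg_right ha1 (by positivity)
    linarith
  have hΨb : Ψ (a * a * M / Cc) ≤ (a * a * M / Cc) * Ψ 1 := by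
    have := psi_chord hΨ0 hΨconv hb0 one_pos hb1
    rwa [div_one] at this
  have e1 : Ψ (a * a * M / Cc) * μt ≤ (a * a * M / Cc) * Ψ 1 * μt :=
    mul_le_mul_of_nonneg_right hΨb hμt0
  have e2 : (a * a * M / Cc) * Ψ 1 * μt ≤ (a * (8 * I1) / Cc) * Ψ 1 * μt := by
    apply mul_le_mul_of_nonneg_right _ hμt0
    apply mul_le_mul_of_nonneg_right _ hΨ1.le
    rw [div_le_div_iff₀ hCc0 hCc0]
    exact mul_le_mul_of_nonneg_right hble1 hCc0.le
  have e3 : (a * (8 * I1) / Cc) * Ψ 1 * μt = a * (8 * I1 * Ψ 1 * μt / Cc) := by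
    field_simp
  have e4 : a * (8 * I1 * Ψ 1 * μt / Cc) ≤ a * K := mul_le_mul_of_nonneg_left hK ha0.le
  linarith


end realbounds

set_option maxHeartbeats 1000000 in
theorem stmt_14
    (Ψ Ψinv : ℝ → ℝ)
    (hΨ0 : Ψ 0 = 0)
    (hΨmono : StrictMonoOn Ψ (Set.Ici 0))
    (hΨconv : StrictConvexOn ℝ (Set.Ici 0) Ψ)
    (hΨcont : ContinuousOn Ψ (Set.Ici 0))
    (hΨlim : Filter.Tendsto (fun x => Ψ x / x) Filter.atTop Filter.atTop)
    (hΨinv1 : ∀ x, 0 ≤ x → Ψinv (Ψ x) = x)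
    (hΨinv2 : ∀ y, 0 ≤ y → Ψ (Ψinv y) = y)
    (hΨinv0 : ∀ y, 0 ≤ y → 0 ≤ Ψinv y)
    (μ : Measure ℂ) [IsFiniteMeasure μ]
    (hμ : μ (Metric.closedBall (0 : ℂ) 1)ᶜ = 0) :
    (∃ A > (0 : ℝ), ∀ ξ : ℂ, ‖ξ‖ = 1 → ∀ h : ℝ, 0 < h → h < 1 →
      μ (carlesonWindow ξ h) ≤ ENNReal.ofReal (1 / Ψ (A * Ψinv (1 / h))))
    ↔
    (∃ C > (0 : ℝ), ∀ ξ : ℂ, ‖ξ‖ = 1 → ∀ h : ℝ, 0 < h → h < 1 →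
      luxNorm Ψ μ (uar ξ (1 - h)) ≤ ENNReal.ofReal (C / Ψinv (1 / h))) := by
  constructor
  · rintro ⟨A, hA, hAb⟩
    have hΨ1pos : 0 < Ψ 1 := psi_pos hΨ0 hΨmono one_pos
    have hΨi1 : 0 ≤ Ψinv 1 := hΨinv0 1 one_pos.le
    obtain ⟨μt, hμtdef⟩ : ∃ x : ℝ, x = (μ Set.univ).toReal := ⟨_, rfl⟩
    have hμt0 : 0 ≤ μt := hμtdef ▸ ENNReal.toReal_nonneg
    obtain ⟨Cc, hCcdef⟩ : ∃ x : ℝ, x = 16 / A + 32 * (Ψinv 1 + 1) * (Ψ 1 + 1) * (μt + 1) :=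
      ⟨_, rfl⟩
    have hCc0 : 0 < Cc := by rw [hCcdef]; positivity
    have hACc : 16 ≤ A * Cc := by
      have he : A * (16 / A) = 16 := by field_simp
      have hrest : (0:ℝ) ≤ 32 * (Ψinv 1 + 1) * (Ψ 1 + 1) * (μt + 1) := by positivity
      rw [hCcdef]
      nlinarith [mul_nonneg hA.le hrest]
    have hCclb : 8 * Ψinv 1 ≤ Cc := by
      have h16A : (0:ℝ) < 16 / A := by positivity
      rw [hCcdef]
      nlinarith [mul_nonneg hΨi1 hΨ1pos.le, mul_nonneg hΨi1 hμt0,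
        mul_nonneg (mul_nonneg hΨi1 hΨ1pos.le) hμt0, hΨi1, hΨ1pos.le, hμt0]
    have hCclb2 : 32 * Ψinv 1 * Ψ 1 * μt ≤ Cc := by
      have h16A : (0:ℝ) < 16 / A := by positivity
      rw [hCcdef]
      nlinarith [mul_nonneg hΨi1 hΨ1pos.le, mul_nonneg hΨi1 hμt0,
        mul_nonneg hΨ1pos.le hμt0,
        mul_nonneg (mul_nonneg hΨi1 hΨ1pos.le) hμt0, hΨi1, hΨ1pos.le, hμt0]
    refine ⟨Cc, hCc0, ?_⟩
    intro ξ hξ h h0 h1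
    have hM : 0 < Ψinv (1 / h) :=
      psiinv_pos hΨ0 hΨmono hΨinv2 hΨinv0 (by positivity)
    set M : ℝ := Ψinv (1 / h) with hMdef
    have hcpos : 0 < Cc / M := div_pos hCc0 hM
    rw [luxNorm]
    apply sInf_le
    refine ⟨Cc / M, hcpos, rfl, ?_⟩
    simp only [div_div_eq_mul_div]
    -- the dyadic decomposition
    set F : ℕ → Set ℂ := fun j =>
      {z : ℂ | ‖z‖ ≤ 1 ∧ (2:ℝ)^j * h ≤ DD ξ h z ∧ DD ξ h z < (2:ℝ)^(j+1) * h}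
      with hFdef
    have hDDm : Measurable fun z : ℂ => DD ξ h z := by
      apply Continuous.measurable
      unfold DD
      exact continuous_norm.comp (by continuity)
    have habsm : Measurable fun z : ℂ => ‖z‖ := continuous_norm.measurable
    have hFm : ∀ j, MeasurableSet (F j) := by
      intro j
      rw [hFdef]
      simp only [Set.setOf_and]
      exact (measurableSet_le habsm measurable_const).inter
        ((measurableSet_le measurable_const hDDm).inter
          (measurableSet_lt hDDm measurable_const))
    set g : ℕ → ℂ → ENNReal := fun j =>
      (F j).indicator (fun _ => ENNReal.ofReal (Ψ ((1/4:ℝ)^j * M / Cc))) with hgdef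
    -- a.e. points are in the closed disk
    have hae : ∀ᵐ z ∂μ, ‖z‖ ≤ 1 := by
      have hset : {z : ℂ | ¬ ‖z‖ ≤ 1} = (Metric.closedBall (0:ℂ) 1)ᶜ := by
        ext z
        simp [Metric.mem_closedBall, Complex.dist_eq, sub_zero]
      rw [ae_iff, hset, hμ]
    -- pointwise bound
    have hpt : ∀ᵐ z ∂μ, ENNReal.ofReal (Ψ (‖uar ξ (1 - h) z‖ * M / Cc))
        ≤ ∑' j, g j z := by
      filter_upwards [hae] with z hz
      have hDge := DD_ge ξ z hξ h0.le h1.le hz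
      have hDpos : 0 < DD ξ h z := lt_of_lt_of_le h0 hDge
      obtain ⟨n, hn1, hn2⟩ := exists_dyadic (x := DD ξ h z / h)
        (by rw [le_div_iff₀ h0]; linarith)
      have hzF : z ∈ F n := by
        refine ⟨hz, ?_, ?_⟩
        · rw [← le_div_iff₀ h0] at *; exact hn1
        · rw [← div_lt_iff₀ h0] at *; exact hn2
      have hub : ‖uar ξ (1 - h) z‖ ≤ (1/4:ℝ)^n := by
        rw [uar_abs ξ z h0.le]
        have hstep : h / DD ξ h z ≤ (1/2:ℝ)^n := by
          rw [div_le_iff₀ hDpos]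
          have h2n : ((1/2:ℝ))^n * (2:ℝ)^n = 1 := by rw [← mul_pow]; norm_num
          have hp : (0:ℝ) < (1/2:ℝ)^n := by positivity
          have h2p : (0:ℝ) < (2:ℝ)^n := by positivity
          have hD2 : (2:ℝ)^n * h ≤ DD ξ h z := by
            rw [← le_div_iff₀ h0]; exact hn1
          nlinarith
        have hsq : (((1/2:ℝ))^n)^2 = ((1/4:ℝ))^n := by
          rw [← pow_mul, mul_comm, pow_mul]; norm_num
        calc (h / DD ξ h z)^2 ≤ (((1/2:ℝ))^n)^2 := by
              apply pow_le_pow_left₀ (by positivity) hstep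
          _ = ((1/4:ℝ))^n := hsq
      calc ENNReal.ofReal (Ψ (‖uar ξ (1 - h) z‖ * M / Cc))
          ≤ g n z := by
            rw [hgdef]
            simp only [Set.indicator_of_mem hzF]
            apply ENNReal.ofReal_le_ofReal
            apply psi_mono_le hΨmono
              (div_nonneg (mul_nonneg (norm_nonneg _) hM.le) hCc0.le)
            rw [div_le_div_iff₀ hCc0 hCc0]
            exact mul_le_mul_of_nonneg_right
              (mul_le_mul_of_nonneg_right hub hM.le) hCc0.le
        _ ≤ ∑' j, g j z := ENNReal.le_tsum n
    -- the integral bound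
    have hInt : (∫⁻ z, ENNReal.ofReal (Ψ (‖uar ξ (1 - h) z‖ * M / Cc)) ∂μ)
        ≤ ∑' j, ENNReal.ofReal (Ψ ((1/4:ℝ)^j * M / Cc)) * μ (F j) := by
      calc (∫⁻ z, ENNReal.ofReal (Ψ (‖uar ξ (1 - h) z‖ * M / Cc)) ∂μ)
          ≤ ∫⁻ z, ∑' j, g j z ∂μ := lintegral_mono_ae hpt
        _ = ∑' j, ∫⁻ z, g j z ∂μ :=
            lintegral_tsum fun j => (measurable_const.indicator (hFm j)).aemeasurable
        _ = ∑' j, ENNReal.ofReal (Ψ ((1/4:ℝ)^j * M / Cc)) * μ (F j) :=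
            tsum_congr fun j => lintegral_indicator_const (hFm j) _
    -- per-term bound
    obtain ⟨K, hKdef⟩ : ∃ x : ℝ, x = 4 / (Cc * A) + 8 * Ψinv 1 * Ψ 1 * μt / Cc := ⟨_, rfl⟩
    have hK0 : 0 ≤ K := by
      rw [hKdef]
      have h1' : (0:ℝ) ≤ 4 / (Cc * A) := div_nonneg (by norm_num) (mul_nonneg hCc0.le hA.le)
      have h2' : (0:ℝ) ≤ 8 * Ψinv 1 * Ψ 1 * μt / Cc :=
        div_nonneg (mul_nonneg (mul_nonneg (mul_nonneg (by norm_num) hΨi1) hΨ1pos.le) hμt0) hCc0.le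
      linarith
    have hperj : ∀ j : ℕ, ENNReal.ofReal (Ψ ((1/4:ℝ)^j * M / Cc)) * μ (F j)
        ≤ ENNReal.ofReal ((1/2:ℝ)^j * K) := by
      intro j
      set a : ℝ := (1/2:ℝ)^j with hadef
      have ha0 : 0 < a := by rw [hadef]; positivity
      have ha1 : a ≤ 1 := by rw [hadef]; exact pow_le_one₀ (by norm_num) (by norm_num)
      have haa : ((1/4:ℝ))^j = a * a := by rw [hadef, ← mul_pow]; norm_num
      have ha2 : a * (2:ℝ)^j = 1 := by rw [hadef, ← mul_pow]; norm_num
      have h2jpos : (0:ℝ) < (2:ℝ)^j := by positivity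
      have hpow42 : (2:ℝ)^(j+2) = (2:ℝ)^j * 4 := by rw [pow_add]; norm_num
      have hpow12 : (2:ℝ)^(j+1) = (2:ℝ)^j * 2 := by rw [pow_add]; norm_num
      rw [haa]
      have hbnn : (0:ℝ) ≤ a * a * M / Cc :=
        div_nonneg (mul_nonneg (mul_nonneg ha0.le ha0.le) hM.le) hCc0.le
      by_cases hcase : (2:ℝ)^(j+2) * h ≤ 1/2
      · -- head: use the Carleson window bound
        have ht0 : 0 < (2:ℝ)^(j+2) * h := by positivity
        have ht1 : (2:ℝ)^(j+2) * h < 1 := by linarith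
        have hsub : F j ⊆ carlesonWindow ξ ((2:ℝ)^(j+2) * h) := by
          intro z hzF
          obtain ⟨hz1, hz2, hz3⟩ := hzF
          have hs4 : (2:ℝ)^(j+1) * h ≤ 1/4 := by
            rw [hpow12]
            rw [hpow42] at hcase
            linarith
          have hmem := mem_window_of_DD_lt ξ z hξ h0 h1 hs4 hz1 hz3
          have ht2 : 2 * ((2:ℝ)^(j+1) * h) = (2:ℝ)^(j+2) * h := by
            rw [hpow12, hpow42]; ring
          rwa [ht2] at hmem
        have hμF : μ (F j) ≤ ENNReal.ofReal (1 / Ψ (A * Ψinv (1 / ((2:ℝ)^(j+2) * h)))) :=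
          (measure_mono hsub).trans (hAb ξ hξ _ ht0 ht1)
        have hyl : a / 4 * M ≤ Ψinv (1 / ((2:ℝ)^(j+2) * h)) := by
          have hl : a / 4 * (1 / h) = 1 / ((2:ℝ)^(j+2) * h) := by
            rw [hpow42]
            field_simp
            have hX : (1/2:ℝ)^j * 2^j = 1 := by rw [← mul_pow]; norm_num
            linear_combination hX
          have hsc := psiinv_scale hΨ0 hΨmono hΨconv hΨinv2 hΨinv0
            (l := a / 4) (t := 1 / h) (by positivity) (by linarith) (by positivity)
          rw [hl] at hsc
          exact hsc
        have hypos : 0 < Ψinv (1 / ((2:ℝ)^(j+2) * h)) :=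
          psiinv_pos hΨ0 hΨmono hΨinv2 hΨinv0 (by positivity)
        have hxpos : 0 < A * Ψinv (1 / ((2:ℝ)^(j+2) * h)) := by positivity
        have hreal : Ψ (a * a * M / Cc) * (1 / Ψ (A * Ψinv (1 / ((2:ℝ)^(j+2) * h)))) ≤ a * K := by
          apply head_real_bound hΨ0 hΨmono hΨconv ha0 ha1 hM hCc0 hA hyl hACc
          rw [hKdef]
          have hnn : (0:ℝ) ≤ 8 * Ψinv 1 * Ψ 1 * μt / Cc :=
            div_nonneg (mul_nonneg (mul_nonneg (mul_nonneg (by norm_num) hΨi1)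
              hΨ1pos.le) hμt0) hCc0.le
          linarith
        calc ENNReal.ofReal (Ψ (a * a * M / Cc)) * μ (F j)
            ≤ ENNReal.ofReal (Ψ (a * a * M / Cc))
                * ENNReal.ofReal (1 / Ψ (A * Ψinv (1 / ((2:ℝ)^(j+2) * h)))) :=
              mul_le_mul_right hμF _
          _ = ENNReal.ofReal (Ψ (a * a * M / Cc) * (1 / Ψ (A * Ψinv (1 / ((2:ℝ)^(j+2) * h))))) :=
              (ENNReal.ofReal_mul (psi_nonneg hΨ0 hΨmono hbnn)).symm
          _ ≤ ENNReal.ofReal (a * K) := ENNReal.ofReal_le_ofReal hreal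
      · -- tail: use the total mass
        rw [not_le] at hcase
        have hah : a < 8 * h := by
          rw [hpow42] at hcase
          have h5 := mul_lt_mul_of_pos_left hcase ha0
          have h6 : a * ((2:ℝ)^j * 4 * h) = 4 * h := by
            calc a * ((2:ℝ)^j * 4 * h) = (a * (2:ℝ)^j) * (4 * h) := by ring
              _ = 4 * h := by rw [ha2]; ring
          rw [h6] at h5
          linarith
        have hhM : h * M ≤ Ψinv 1 := by
          have hsc := psiinv_scale hΨ0 hΨmono hΨconv hΨinv2 hΨinv0
            (l := h) (t := 1 / h) h0.le h1.le (by positivity)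
          rw [mul_one_div, div_self h0.ne'] at hsc
          exact hsc
        have haM : a * M ≤ 8 * Ψinv 1 := by
          have hs1 : a * M ≤ 8 * h * M := by
            have := mul_le_mul_of_nonneg_right hah.le hM.le
            linarith
          linarith
        have hreal : Ψ (a * a * M / Cc) * μt ≤ a * K := by
          apply tail_real_bound hΨ0 hΨmono hΨconv ha0 ha1 hM hCc0 hμt0 hΨi1 haM hCclb
          rw [hKdef]
          have hnn : (0:ℝ) ≤ 4 / (Cc * A) :=
            div_nonneg (by norm_num) (mul_nonneg hCc0.le hA.le)
          linarith
        calc ENNReal.ofReal (Ψ (a * a * M / Cc)) * μ (F j)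
            ≤ ENNReal.ofReal (Ψ (a * a * M / Cc)) * μ Set.univ :=
              mul_le_mul_right (measure_mono (Set.subset_univ _)) _
          _ = ENNReal.ofReal (Ψ (a * a * M / Cc)) * ENNReal.ofReal μt := by
              rw [hμtdef, ENNReal.ofReal_toReal (measure_ne_top μ _)]
          _ = ENNReal.ofReal (Ψ (a * a * M / Cc) * μt) :=
              (ENNReal.ofReal_mul (psi_nonneg hΨ0 hΨmono hbnn)).symm
          _ ≤ ENNReal.ofReal (a * K) := ENNReal.ofReal_le_ofReal hreal
    -- sum the geometric series
    have hhalf : ENNReal.ofReal ((1:ℝ)/2) = (2:ENNReal)⁻¹ := by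
      rw [show (1/2:ℝ) = ((2:ℝ))⁻¹ by norm_num, ENNReal.ofReal_inv_of_pos (by norm_num),
        ENNReal.ofReal_ofNat]
    have hsum : (∑' j : ℕ, ENNReal.ofReal (Ψ ((1/4:ℝ)^j * M / Cc)) * μ (F j)) ≤ 1 := by
      calc (∑' j : ℕ, ENNReal.ofReal (Ψ ((1/4:ℝ)^j * M / Cc)) * μ (F j))
          ≤ ∑' j : ℕ, ENNReal.ofReal ((1/2:ℝ)^j * K) := ENNReal.tsum_le_tsum hperj
        _ = ∑' j : ℕ, (ENNReal.ofReal ((1:ℝ)/2))^j * ENNReal.ofReal K := by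
            apply tsum_congr
            intro j
            rw [← ENNReal.ofReal_pow (by norm_num), ← ENNReal.ofReal_mul (by positivity)]
        _ = (1 - (2:ENNReal)⁻¹)⁻¹ * ENNReal.ofReal K := by
            rw [ENNReal.tsum_mul_right, ENNReal.tsum_geometric, hhalf]
        _ = 2 * ENNReal.ofReal K := by
            congr 1
            rw [show (1:ENNReal) - 2⁻¹ = 2⁻¹ by
              rw [← ENNReal.inv_two_add_inv_two, ENNReal.add_sub_cancel_right (by norm_num)]]
            exact inv_inv 2
        _ = ENNReal.ofReal (2 * K) := by
            rw [ENNReal.ofReal_mul (by norm_num), ENNReal.ofReal_ofNat]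
        _ ≤ 1 := by
            apply ENNReal.ofReal_le_one.mpr
            have hK1 : 8 / (Cc * A) ≤ 1/2 := by
              rw [div_le_iff₀ (by positivity)]
              linarith [hACc]
            have hK2 : 16 * Ψinv 1 * Ψ 1 * μt / Cc ≤ 1/2 := by
              rw [div_le_iff₀ hCc0]
              linarith [hCclb2]
            have : 2 * K = 8 / (Cc * A) + 16 * Ψinv 1 * Ψ 1 * μt / Cc := by
              rw [hKdef]; ring
            linarith
    exact hInt.trans hsum
  · rintro ⟨C, hC, hCb⟩
    refine ⟨1 / (16 * (C + 1)), by positivity, ?_⟩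
    intro ξ hξ h h0 h1
    have hM : 0 < Ψinv (1 / h) :=
      psiinv_pos hΨ0 hΨmono hΨinv2 hΨinv0 (by positivity)
    set M : ℝ := Ψinv (1 / h) with hMdef
    have hlt : luxNorm Ψ μ (uar ξ (1 - h)) < ENNReal.ofReal ((C + 1) / M) := by
      refine lt_of_le_of_lt (hCb ξ hξ h h0 h1) ?_
      rw [ENNReal.ofReal_lt_ofReal_iff (by positivity)]
      exact div_lt_div_of_pos_right (by linarith) hM
    rw [luxNorm] at hlt
    obtain ⟨S, hS, hSlt⟩ := sInf_lt_iff.mp hlt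
    obtain ⟨c, hc0, rfl, hint⟩ := hS
    have hclt : c < (C + 1) / M := by
      rw [ENNReal.ofReal_lt_ofReal_iff (by positivity)] at hSlt
      exact hSlt
    -- the window is measurable
    have hWm : MeasurableSet (carlesonWindow ξ h) := by
      have h1m : Measurable fun z : ℂ => ‖z‖ := continuous_norm.measurable
      have h2m : Measurable fun z : ℂ => |Complex.arg (z * (starRingEnd ℂ) ξ)| :=
        (Complex.measurable_arg.comp (measurable_mul_const _)).abs
      exact (measurableSet_le h1m measurable_const).inter
        ((measurableSet_lt measurable_const h1m).inter
          (measurableSet_lt h2m measurable_const))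
    -- |u| ≥ 1/16 on the window
    have hulb : ∀ z ∈ carlesonWindow ξ h,
        1 / 16 ≤ ‖uar ξ (1 - h) z‖ := by
      intro z hzW
      have hDle := DD_le_of_mem_window ξ z hξ h0 h1 hzW
      have hDge := DD_ge ξ z hξ h0.le h1.le hzW.1
      have hDpos : 0 < DD ξ h z := lt_of_lt_of_le h0 hDge
      rw [uar_abs ξ z h0.le]
      have hq : 1 / 4 ≤ h / DD ξ h z := by
        rw [le_div_iff₀ hDpos]
        linarith
      calc (1:ℝ)/16 = (1/4)^2 := by norm_num
        _ ≤ (h / DD ξ h z)^2 := by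
          apply pow_le_pow_left₀ (by norm_num) hq
    -- lower bound for the integral
    have hψc : 0 < Ψ (1 / (16 * c)) := psi_pos hΨ0 hΨmono (by positivity)
    have key : ENNReal.ofReal (Ψ (1 / (16 * c))) * μ (carlesonWindow ξ h) ≤ 1 := by
      calc ENNReal.ofReal (Ψ (1 / (16 * c))) * μ (carlesonWindow ξ h)
          = ∫⁻ z, (carlesonWindow ξ h).indicator
              (fun _ => ENNReal.ofReal (Ψ (1 / (16 * c)))) z ∂μ :=
            (lintegral_indicator_const hWm _).symm
        _ ≤ ∫⁻ z, ENNReal.ofReal (Ψ (‖uar ξ (1 - h) z‖ / c)) ∂μ := by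
            apply lintegral_mono
            intro z
            by_cases hzW : z ∈ carlesonWindow ξ h
            · rw [Set.indicator_of_mem hzW]
              apply ENNReal.ofReal_le_ofReal
              apply psi_mono_le hΨmono (by positivity)
              have hub := hulb z hzW
              calc (1:ℝ) / (16 * c) = (1/16) / c := by ring
                _ ≤ ‖uar ξ (1 - h) z‖ / c := by gcongr
            · rw [Set.indicator_of_notMem hzW]
              exact zero_le
        _ ≤ 1 := hint
    have hμW : μ (carlesonWindow ξ h) ≤ ENNReal.ofReal (1 / Ψ (1 / (16 * c))) := by
      rw [one_div, ENNReal.ofReal_inv_of_pos hψc]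
      rw [ENNReal.le_inv_iff_mul_le, mul_comm]
      exact key
    refine hμW.trans (ENNReal.ofReal_le_ofReal ?_)
    have hAM : 1 / (16 * (C + 1)) * M ≤ 1 / (16 * c) := by
      rw [div_mul_eq_mul_div, div_le_div_iff₀ (by positivity) (by positivity)]
      have : c * M < C + 1 := by
        rw [← lt_div_iff₀ hM]
        exact hclt
      nlinarith
    have hψle : Ψ (1 / (16 * (C + 1)) * M) ≤ Ψ (1 / (16 * c)) :=
      psi_mono_le hΨmono (by positivity) hAM
    have hψpos2 : 0 < Ψ (1 / (16 * (C + 1)) * M) :=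
      psi_pos hΨ0 hΨmono (by positivity)
    exact one_div_le_one_div_of_le hψpos2 hψle
end

section
/- For every integer p ≥ 1 and every a ∈ ℂ with |a| < 1, setting ω = exp(2πi/p), one has (1/p) · Σ_{k=0}^{p−1} 1/|1 − a·ω^k|² = (1 − |a|^{2p}) / ( (1 − |a|²) · |1 − a^p|² ), and this quantity is at least (p/4)·|a|^p. -/
open Finset Complex

private lemma orth15 (p : ℕ) (ω : ℂ) (hprim : IsPrimitiveRoot ω p)
    (habs : ‖ω‖ = 1) {m n : ℕ} (hm : m < p) (hn : n < p) :
    ∑ k ∈ Finset.range p, (ω ^ k) ^ m * (starRingEnd ℂ) ((ω ^ k) ^ n)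
      = if m = n then (p : ℂ) else 0 := by
  have habsn : ‖ω ^ n‖ = 1 := by rw [norm_pow, habs, one_pow]
  have hnsq : (starRingEnd ℂ) (ω ^ n) * ω ^ n = 1 := by
    rw [mul_comm, Complex.mul_conj, ← Complex.sq_norm, habsn]
    norm_num
  have hterm : ∀ k, (ω ^ k) ^ m * (starRingEnd ℂ) ((ω ^ k) ^ n)
      = (ω ^ m * (starRingEnd ℂ) (ω ^ n)) ^ k := by
    intro k
    simp only [mul_pow, ← pow_mul, ← map_pow]
    rw [Nat.mul_comm k m, Nat.mul_comm k n]
  simp only [hterm]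
  by_cases h : m = n
  · subst h
    have h1 : ω ^ m * (starRingEnd ℂ) (ω ^ m) = 1 := by
      rw [mul_comm]; exact hnsq
    rw [if_pos rfl]
    rw [Finset.sum_congr rfl (fun k _ => by rw [h1])]
    simp
  · have hζp : (ω ^ m * (starRingEnd ℂ) (ω ^ n)) ^ p = 1 := by
      rw [mul_pow, ← pow_mul, ← map_pow, ← pow_mul, Nat.mul_comm m p, Nat.mul_comm n p,
        pow_mul, pow_mul, hprim.pow_eq_one, one_pow, one_pow, map_one, one_mul]
    have hζ1 : ω ^ m * (starRingEnd ℂ) (ω ^ n) ≠ 1 := by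
      intro hζ
      apply h
      apply hprim.pow_inj hm hn
      have h2 : ω ^ m * ((starRingEnd ℂ) (ω ^ n) * ω ^ n) = 1 * ω ^ n := by
        rw [← mul_assoc, hζ]
      rw [hnsq, mul_one, one_mul] at h2
      exact h2
    rw [geom_sum_eq hζ1, hζp, if_neg h]
    simp

private lemma parseval15 (p : ℕ) (ω : ℂ) (hprim : IsPrimitiveRoot ω p)
    (habs : ‖ω‖ = 1) (a : ℂ) :
    ∑ k ∈ Finset.range p, ((Complex.normSq (∑ n ∈ Finset.range p, a ^ n * (ω ^ k) ^ n) : ℝ) : ℂ)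
      = (p : ℂ) * ∑ n ∈ Finset.range p, ((Complex.normSq a : ℝ) : ℂ) ^ n := by
  have : ∀ k, ((Complex.normSq (∑ n ∈ Finset.range p, a ^ n * (ω ^ k) ^ n) : ℝ) : ℂ)
      = ∑ m ∈ Finset.range p, ∑ n ∈ Finset.range p,
          (a ^ m * (starRingEnd ℂ) a ^ n) * ((ω ^ k) ^ m * (starRingEnd ℂ) ((ω ^ k) ^ n)) := by
    intro k
    rw [← Complex.mul_conj, map_sum, Finset.sum_mul_sum]
    refine Finset.sum_congr rfl fun m _ => Finset.sum_congr rfl fun n _ => ?_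
    rw [map_mul, map_pow, map_pow]
    ring
  simp only [this]
  rw [Finset.sum_comm]
  have swap2 : ∀ m, ∑ k ∈ Finset.range p, ∑ n ∈ Finset.range p,
        (a ^ m * (starRingEnd ℂ) a ^ n) * ((ω ^ k) ^ m * (starRingEnd ℂ) ((ω ^ k) ^ n))
      = ∑ n ∈ Finset.range p, (a ^ m * (starRingEnd ℂ) a ^ n) *
          ∑ k ∈ Finset.range p, ((ω ^ k) ^ m * (starRingEnd ℂ) ((ω ^ k) ^ n)) := by
    intro m
    rw [Finset.sum_comm]
    exact Finset.sum_congr rfl fun n _ => by rw [Finset.mul_sum]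
  simp only [swap2]
  have collapse : ∀ m ∈ Finset.range p,
      ∑ n ∈ Finset.range p, (a ^ m * (starRingEnd ℂ) a ^ n) *
          ∑ k ∈ Finset.range p, ((ω ^ k) ^ m * (starRingEnd ℂ) ((ω ^ k) ^ n))
      = (p : ℂ) * ((Complex.normSq a : ℝ) : ℂ) ^ m := by
    intro m hm
    rw [Finset.mem_range] at hm
    rw [Finset.sum_congr rfl (fun n hn => by
      rw [orth15 p ω hprim habs hm (Finset.mem_range.mp hn)])]
    simp only [mul_ite, mul_zero]
    rw [Finset.sum_ite_eq (Finset.range p) m (fun n => a ^ m * (starRingEnd ℂ) a ^ n * (p:ℂ)),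
      if_pos (Finset.mem_range.mpr hm)]
    have : a ^ m * (starRingEnd ℂ) a ^ m = ((Complex.normSq a : ℝ) : ℂ) ^ m := by
      rw [← mul_pow, Complex.mul_conj]
    rw [this]; ring
  rw [Finset.sum_congr rfl collapse, ← Finset.mul_sum]

theorem stmt_15 (p : ℕ) (hp : 1 ≤ p) (a : ℂ) (ha : ‖a‖ < 1) :
    ((1 : ℝ) / p) * ∑ k ∈ Finset.range p,
        1 / (‖1 - a * Complex.exp (2 * (Real.pi : ℂ) * Complex.I / p) ^ k‖) ^ 2
      = (1 - (‖a‖) ^ (2 * p)) /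
        ((1 - (‖a‖) ^ 2) * (‖1 - a ^ p‖) ^ 2) ∧
    ((p : ℝ) / 4) * (‖a‖) ^ p ≤
      (1 - (‖a‖) ^ (2 * p)) /
        ((1 - (‖a‖) ^ 2) * (‖1 - a ^ p‖) ^ 2) := by
  have hp0 : p ≠ 0 := by omega
  have hpR : (0 : ℝ) < p := by positivity
  set ω : ℂ := Complex.exp (2 * (Real.pi : ℂ) * Complex.I / p) with hωdef
  have hprim : IsPrimitiveRoot ω p := Complex.isPrimitiveRoot_exp p hp0
  have habsω : ‖ω‖ = 1 := by
    have : (2 * (Real.pi : ℂ) * Complex.I / p) = ((2 * Real.pi / p : ℝ) : ℂ) * Complex.I := by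
      push_cast; ring
    rw [hωdef, this, Complex.norm_exp_ofReal_mul_I]
  set t : ℝ := ‖a‖ ^ 2 with htdef
  have ht0 : 0 ≤ t := by positivity
  have ht1 : t < 1 := by
    rw [htdef]
    nlinarith [norm_nonneg a]
  have htnormSq : t = Complex.normSq a := by rw [htdef, Complex.sq_norm]
  have hap : ‖a ^ p‖ < 1 := by
    rw [norm_pow]
    exact pow_lt_one₀ (norm_nonneg a) ha hp0
  have hap0 : (1 : ℂ) - a ^ p ≠ 0 := by
    intro h
    have : a ^ p = 1 := by linear_combination -h
    rw [this] at hap; simp at hap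
  set N : ℝ := ‖1 - a ^ p‖ ^ 2 with hNdef
  have hN0 : 0 < N := by
    rw [hNdef]
    have := norm_pos_iff.mpr hap0
    positivity
  have hN4 : N ≤ 4 := by
    have h2 : ‖1 - a ^ p‖ ≤ 2 := by
      calc ‖1 - a ^ p‖ = ‖1 + -(a ^ p)‖ := by rw [sub_eq_add_neg]
        _ ≤ ‖(1:ℂ)‖ + ‖-(a ^ p)‖ := norm_add_le _ _
        _ = 1 + ‖a ^ p‖ := by simp
        _ ≤ 2 := by linarith
    rw [hNdef]
    nlinarith [norm_nonneg (1 - a ^ p)]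
  -- geometric sum identity in ℝ
  have hgeom : (1 - t) * ∑ n ∈ Finset.range p, t ^ n = 1 - t ^ p := by
    have := geom_sum_mul t p
    linarith [this]
  have habs2p : ‖a‖ ^ (2 * p) = t ^ p := by
    rw [htdef, ← pow_mul, Nat.mul_comm]
  -- equality part
  have heq : ((1 : ℝ) / p) * ∑ k ∈ Finset.range p,
        1 / (‖1 - a * ω ^ k‖) ^ 2
      = (1 - ‖a‖ ^ (2 * p)) / ((1 - ‖a‖ ^ 2) * N) := by
    -- per-term identity
    have hterm : ∀ k, (1 : ℝ) / (‖1 - a * ω ^ k‖) ^ 2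
        = Complex.normSq (∑ n ∈ Finset.range p, a ^ n * (ω ^ k) ^ n) / N := by
      intro k
      have hfac : (1 : ℂ) - a ^ p
          = (1 - a * ω ^ k) * ∑ n ∈ Finset.range p, a ^ n * (ω ^ k) ^ n := by
        have h1 : (∑ n ∈ Finset.range p, (a * ω ^ k) ^ n) * ((a * ω ^ k) - 1)
            = (a * ω ^ k) ^ p - 1 := geom_sum_mul _ p
        have h2 : (a * ω ^ k) ^ p = a ^ p := by
          rw [mul_pow, ← pow_mul, Nat.mul_comm, pow_mul, hprim.pow_eq_one, one_pow, mul_one]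
        have h3 : ∀ n, (a * ω ^ k) ^ n = a ^ n * (ω ^ k) ^ n := fun n => mul_pow _ _ _
        rw [h2] at h1
        simp only [h3] at h1
        linear_combination h1
      have hne : (1 : ℂ) - a * ω ^ k ≠ 0 := by
        intro h
        have h' : a * ω ^ k = 1 := by linear_combination -h
        have habs1 : ‖a * ω ^ k‖ = 1 := by rw [h', norm_one]
        rw [norm_mul, norm_pow, habsω, one_pow, mul_one] at habs1
        linarith
      have hNS1 : (0:ℝ) < Complex.normSq (1 - a * ω ^ k) := Complex.normSq_pos.mpr hne
      have hNfac' : N = Complex.normSq (1 - a * ω ^ k) *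
          Complex.normSq (∑ n ∈ Finset.range p, a ^ n * (ω ^ k) ^ n) := by
        rw [hNdef, Complex.sq_norm, hfac, Complex.normSq_mul]
      have hNS2 : Complex.normSq (∑ n ∈ Finset.range p, a ^ n * (ω ^ k) ^ n) ≠ 0 := by
        intro h
        rw [hNfac', h, mul_zero] at hN0
        exact lt_irrefl 0 hN0
      rw [Complex.sq_norm, hNfac', mul_comm (Complex.normSq (1 - a * ω ^ k)), div_mul_eq_div_div, div_self hNS2]
    simp only [hterm]
    rw [← Finset.sum_div]
    -- Parseval
    have hpar : ∑ k ∈ Finset.range p,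
        Complex.normSq (∑ n ∈ Finset.range p, a ^ n * (ω ^ k) ^ n)
        = (p : ℝ) * ∑ n ∈ Finset.range p, t ^ n := by
      have := parseval15 p ω hprim habsω a
      have hc : ((∑ k ∈ Finset.range p,
          Complex.normSq (∑ n ∈ Finset.range p, a ^ n * (ω ^ k) ^ n) : ℝ) : ℂ)
          = (((p : ℝ) * ∑ n ∈ Finset.range p, t ^ n : ℝ) : ℂ) := by
        push_cast
        rw [htnormSq]
        push_cast at this ⊢
        convert this using 2
      exact_mod_cast hc
    rw [hpar, habs2p]
    have h1t : (1 : ℝ) - ‖a‖ ^ 2 = 1 - t := by rw [htdef]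
    rw [h1t, ← hgeom]
    have hpne : (p : ℝ) ≠ 0 := ne_of_gt hpR
    have ht1' : (1 : ℝ) - t ≠ 0 := by linarith
    have hNne : N ≠ 0 := ne_of_gt hN0
    field_simp
  constructor
  · exact heq
  · -- inequality part
    have hS : (p : ℝ) * ‖a‖ ^ p ≤ ∑ n ∈ Finset.range p, t ^ n := by
      have hSrefl : ∑ n ∈ Finset.range p, t ^ (p - 1 - n) = ∑ n ∈ Finset.range p, t ^ n :=
        Finset.sum_range_reflect (fun n => t ^ n) p
      have hpair : ∀ n ∈ Finset.range p,
          2 * ‖a‖ ^ (p - 1) ≤ t ^ n + t ^ (p - 1 - n) := by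
        intro n hn
        rw [Finset.mem_range] at hn
        have h1 : t ^ n = (‖a‖ ^ n) ^ 2 := by rw [htdef, ← pow_mul, ← pow_mul, Nat.mul_comm]
        have h2 : t ^ (p - 1 - n) = (‖a‖ ^ (p - 1 - n)) ^ 2 := by
          rw [htdef, ← pow_mul, ← pow_mul, Nat.mul_comm]
        have h3 : ‖a‖ ^ n * ‖a‖ ^ (p - 1 - n) = ‖a‖ ^ (p - 1) := by
          rw [← pow_add]
          congr 1
          omega
        calc 2 * ‖a‖ ^ (p - 1)
            = 2 * (‖a‖ ^ n) * (‖a‖ ^ (p - 1 - n)) := by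
              rw [mul_assoc, h3]
          _ ≤ (‖a‖ ^ n) ^ 2 + (‖a‖ ^ (p - 1 - n)) ^ 2 :=
              two_mul_le_add_sq _ _
          _ = t ^ n + t ^ (p - 1 - n) := by rw [h1, h2]
      have hsum : (p : ℝ) * (2 * ‖a‖ ^ (p - 1))
          ≤ ∑ n ∈ Finset.range p, (t ^ n + t ^ (p - 1 - n)) := by
        calc (p : ℝ) * (2 * ‖a‖ ^ (p - 1))
            = ∑ _n ∈ Finset.range p, 2 * ‖a‖ ^ (p - 1) := by
              rw [Finset.sum_const, Finset.card_range, nsmul_eq_mul]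
          _ ≤ _ := Finset.sum_le_sum hpair
      rw [Finset.sum_add_distrib, hSrefl] at hsum
      have hstep : ‖a‖ ^ p ≤ ‖a‖ ^ (p - 1) :=
        pow_le_pow_of_le_one (norm_nonneg a) (le_of_lt ha) (by omega)
      nlinarith [hsum, hstep, hpR]
    have ht1' : (1 : ℝ) - t ≠ 0 := by linarith
    have hRHS : (1 - ‖a‖ ^ (2 * p)) / ((1 - ‖a‖ ^ 2) * N)
        = (∑ n ∈ Finset.range p, t ^ n) / N := by
      have h1t : (1 : ℝ) - ‖a‖ ^ 2 = 1 - t := by rw [htdef]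
      rw [habs2p, ← hgeom, h1t, mul_div_mul_left _ _ ht1']
    rw [hRHS]
    calc ((p : ℝ) / 4) * ‖a‖ ^ p
        = ((p : ℝ) * ‖a‖ ^ p) / 4 := by ring
      _ ≤ (∑ n ∈ Finset.range p, t ^ n) / 4 := by gcongr
      _ ≤ (∑ n ∈ Finset.range p, t ^ n) / N := by
          have hSnn : (0:ℝ) ≤ ∑ n ∈ Finset.range p, t ^ n :=
            le_trans (by positivity) hS
          gcongr
end

section
/- There exists a sequence (z_n)_{n≥1} in the open unit disk 𝔻 = {z ∈ ℂ : |z| < 1} satisfying the Blaschke condition Σ_{n≥1} (1 − |z_n|) < ∞ and such that for every ε > 0 there is c_ε > 0 with Σ_{n≥1} (1 − |z|²)(1 − |z_n|²)/|1 − conj(z_n)·z|² ≥ c_ε · (1 − |z|)^ε for every z ∈ 𝔻. -/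
open Real Complex Finset
set_option maxHeartbeats 1000000

noncomputable def bdel (n : ℕ) : ℝ := (2:ℝ)⁻¹ ^ n / ((n:ℝ)+1)^2

def bL (m : ℕ) : ℕ := Nat.log 2 (m+1)

noncomputable def bZ (m : ℕ) : ℂ :=
  (↑(1 - bdel (bL m)) : ℂ) *
    Complex.exp ((↑(2 * Real.pi * ((m + 1 - 2 ^ bL m : ℕ) : ℝ) / 2 ^ bL m) : ℂ) * Complex.I)

lemma bdel_pos (n : ℕ) : 0 < bdel n := by
  apply div_pos (pow_pos (by norm_num) n)
  positivity

lemma bdel_le (n : ℕ) : bdel n ≤ (2:ℝ)⁻¹ ^ n := by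
  apply div_le_self (by positivity)
  nlinarith [Nat.cast_nonneg (α := ℝ) n]

lemma bdel_le_one (n : ℕ) : bdel n ≤ 1 :=
  (bdel_le n).trans (pow_le_one₀ (by norm_num) (by norm_num))

lemma abs_bZ (m : ℕ) : ‖bZ m‖ = 1 - bdel (bL m) := by
  rw [bZ, norm_mul, Complex.norm_exp_ofReal_mul_I, mul_one, Complex.norm_real, Real.norm_eq_abs,
    _root_.abs_of_nonneg (by linarith [bdel_le_one (bL m)])]

lemma bL_le (m : ℕ) : 2 ^ bL m ≤ m + 1 := Nat.pow_log_le_self 2 (Nat.succ_ne_zero m)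

lemma lt_bL (m : ℕ) : m + 1 < 2 ^ (bL m + 1) := Nat.lt_pow_succ_log_self (by norm_num) _

lemma sum_levels (M : ℕ) :
    ∑ i ∈ Finset.range (2 ^ M - 1), bdel (bL i) = ∑ n ∈ Finset.range M, 1/((n:ℝ)+1)^2 := by
  induction M with
  | zero => simp
  | succ M ih =>
      have h1 : (1:ℕ) ≤ 2 ^ M := Nat.one_le_two_pow
      have h2 : (2:ℕ) ^ (M+1) = 2 ^ M + 2 ^ M := by rw [pow_succ]; ring
      have hle : 2 ^ M - 1 ≤ 2 ^ (M+1) - 1 := by omega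
      rw [Finset.range_eq_Ico, ← Finset.sum_Ico_consecutive _ (Nat.zero_le _) hle,
        ← Finset.range_eq_Ico, ih, Finset.sum_range_succ]
      congr 1
      have hconst : ∀ i ∈ Finset.Ico (2^M - 1) (2^(M+1) - 1), bdel (bL i) = bdel M := by
        intro i hi
        rw [Finset.mem_Ico] at hi
        have : bL i = M := Nat.log_eq_of_pow_le_of_lt_pow (by omega) (by omega)
        rw [this]
      rw [Finset.sum_congr rfl hconst, Finset.sum_const, Nat.card_Ico]
      have hcard : 2 ^ (M+1) - 1 - (2 ^ M - 1) = 2 ^ M := by omega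
      rw [hcard, nsmul_eq_mul, bdel]
      push_cast
      have h2M : (2:ℝ) ^ M * 2⁻¹ ^ M = 1 := by
        rw [← mul_pow]; norm_num
      rw [mul_div_assoc']
      rw [h2M]

lemma summable_inv_sq : Summable (fun n : ℕ => 1/((n:ℝ)+1)^2) := by
  have h := Real.summable_one_div_nat_pow.mpr (show 1 < 2 by norm_num)
  have h2 := (summable_nat_add_iff 1).mpr h
  apply h2.congr
  intro n; push_cast; ring

lemma summable_bdel : Summable (fun m : ℕ => bdel (bL m)) := by
  apply summable_of_sum_range_le (c := ∑' n : ℕ, 1/((n:ℝ)+1)^2) (fun m => (bdel_pos _).le)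
  intro N
  have hN : N ≤ 2 ^ N - 1 := by have := Nat.lt_two_pow_self (n := N); omega
  calc ∑ i ∈ Finset.range N, bdel (bL i)
      ≤ ∑ i ∈ Finset.range (2^N - 1), bdel (bL i) :=
        Finset.sum_le_sum_of_subset_of_nonneg (Finset.range_subset_range.2 hN)
          (fun i _ _ => (bdel_pos _).le)
    _ = ∑ n ∈ Finset.range N, 1/((n:ℝ)+1)^2 := sum_levels N
    _ ≤ ∑' n : ℕ, 1/((n:ℝ)+1)^2 := Summable.sum_le_tsum _ (fun i _ => by positivity) summable_inv_sq

lemma term_nonneg (w : ℂ) (hw : ‖w‖ < 1) (m : ℕ) :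
    0 ≤ (1 - (‖w‖) ^ 2) * (1 - (‖bZ m‖) ^ 2) /
        (‖1 - (starRingEnd ℂ) (bZ m) * w‖) ^ 2 := by
  apply div_nonneg _ (sq_nonneg _)
  apply mul_nonneg
  · nlinarith [norm_nonneg w]
  · rw [abs_bZ]; nlinarith [bdel_pos (bL m), bdel_le_one (bL m)]

lemma abs_one_sub_ge (w : ℂ) (m : ℕ) :
    1 - ‖w‖ ≤ ‖1 - (starRingEnd ℂ) (bZ m) * w‖ := by
  have h1 : ‖(starRingEnd ℂ) (bZ m) * w‖ = (1 - bdel (bL m)) * ‖w‖ := by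
    rw [norm_mul, Complex.norm_conj, abs_bZ]
  have h2 := norm_sub_norm_le (1 : ℂ) ((starRingEnd ℂ) (bZ m) * w)
  simp only [norm_one] at h2
  rw [h1] at h2
  nlinarith [bdel_pos (bL m), bdel_le_one (bL m), norm_nonneg w]

lemma summable_terms (w : ℂ) (hw : ‖w‖ < 1) :
    Summable (fun m : ℕ => (1 - (‖w‖) ^ 2) * (1 - (‖bZ m‖) ^ 2) /
        (‖1 - (starRingEnd ℂ) (bZ m) * w‖) ^ 2) := by
  have hs0 : 0 ≤ ‖w‖ := norm_nonneg w
  have ht : 0 < 1 - ‖w‖ := by linarith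
  refine Summable.of_nonneg_of_le (term_nonneg w hw) ?_
    (summable_bdel.mul_left (2 / (1 - ‖w‖)^2))
  intro m
  have hge := abs_one_sub_ge w m
  have hnum : (1 - (‖w‖) ^ 2) * (1 - (‖bZ m‖) ^ 2) ≤ 2 * bdel (bL m) := by
    rw [abs_bZ]
    have e1 : 1 - (‖w‖)^2 ≤ 1 := by nlinarith
    have e2 : 1 - (1 - bdel (bL m))^2 ≤ 2 * bdel (bL m) := by nlinarith [sq_nonneg (bdel (bL m))]
    have e2' : 0 ≤ 1 - (1 - bdel (bL m))^2 := by
      nlinarith [bdel_pos (bL m), bdel_le_one (bL m)]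
    calc (1 - (‖w‖)^2) * (1 - (1 - bdel (bL m))^2)
        ≤ 1 * (1 - (1 - bdel (bL m))^2) := mul_le_mul_of_nonneg_right e1 e2'
      _ ≤ 2 * bdel (bL m) := by linarith
  calc (1 - (‖w‖) ^ 2) * (1 - (‖bZ m‖) ^ 2) /
        (‖1 - (starRingEnd ℂ) (bZ m) * w‖) ^ 2
      ≤ 2 * bdel (bL m) / (1 - ‖w‖)^2 := by
        apply div_le_div₀ (by nlinarith [bdel_pos (bL m)]) hnum (by positivity)
        nlinarith [norm_nonneg (1 - (starRingEnd ℂ) (bZ m) * w)]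
    _ = (2 / (1 - ‖w‖)^2) * bdel (bL m) := by ring

lemma exists_level {t : ℝ} (ht0 : 0 < t) (ht1 : t ≤ 1) :
    ∃ n : ℕ, (2:ℝ)⁻¹ ^ n ≤ t ∧ t < 2 * (2:ℝ)⁻¹ ^ n := by
  have hex : ∃ n : ℕ, (2:ℝ)⁻¹ ^ n ≤ t := by
    obtain ⟨n, hn⟩ := exists_pow_lt_of_lt_one ht0 (by norm_num : (2:ℝ)⁻¹ < 1)
    exact ⟨n, hn.le⟩
  refine ⟨Nat.find hex, Nat.find_spec hex, ?_⟩
  rcases Nat.eq_zero_or_pos (Nat.find hex) with h0 | h0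
  · rw [h0]; norm_num; linarith
  · have hmin := Nat.find_min hex (show Nat.find hex - 1 < Nat.find hex by omega)
    push_neg at hmin
    have heq : (2:ℝ)⁻¹ ^ (Nat.find hex - 1) = 2 * (2:ℝ)⁻¹ ^ Nat.find hex := by
      have h1 : Nat.find hex = (Nat.find hex - 1) + 1 := by omega
      conv_rhs => rw [h1]
      rw [pow_succ]
      ring
    rw [← heq]; exact hmin

lemma nat_le_pow {b : ℝ} (hb : 1 < b) (n : ℕ) :
    min 1 (b - 1) * ((n:ℝ) + 1) ≤ b ^ n := by
  have h := one_add_mul_le_pow (a := b - 1) (by linarith) n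
  have h1 : min 1 (b-1) ≤ 1 := min_le_left _ _
  have h2 : min 1 (b-1) ≤ b - 1 := min_le_right _ _
  have h3 : (0:ℝ) ≤ n := Nat.cast_nonneg n
  have hb' : (1:ℝ) + (b-1) = b := by ring
  rw [hb'] at h
  nlinarith [mul_le_mul_of_nonneg_right h2 h3]

theorem stmt_16 :
    ∃ z : ℕ → ℂ,
      (∀ n : ℕ, ‖z n‖ < 1) ∧
      Summable (fun n : ℕ => 1 - ‖z n‖) ∧
      ∀ ε > (0 : ℝ), ∃ c > (0 : ℝ), ∀ w : ℂ, ‖w‖ < 1 →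
        c * (1 - ‖w‖) ^ ε ≤
          ∑' n : ℕ, (1 - (‖w‖) ^ 2) * (1 - (‖z n‖) ^ 2) /
            (‖1 - (starRingEnd ℂ) (z n) * w‖) ^ 2 := by
  refine ⟨bZ, fun m => ?_, ?_, ?_⟩
  · rw [abs_bZ]; linarith [bdel_pos (bL m)]
  · apply summable_bdel.congr
    intro m; rw [abs_bZ]; ring
  intro ε hε
  set b : ℝ := (2:ℝ) ^ (ε/2) with hbdef
  have hb1 : 1 < b := by
    rw [hbdef]
    exact (Real.one_lt_rpow_iff_of_pos (by norm_num)).mpr (Or.inl ⟨by norm_num, by linarith⟩)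
  set d : ℝ := min 1 (b - 1) with hddef
  have hd0 : 0 < d := lt_min one_pos (by linarith)
  have h2e : (0:ℝ) < (2:ℝ) ^ ε := Real.rpow_pos_of_pos (by norm_num) ε
  refine ⟨d^2 / (450 * (2:ℝ)^ε), by positivity, ?_⟩
  intro w hw
  have hs0 : 0 ≤ ‖w‖ := norm_nonneg w
  set t : ℝ := 1 - ‖w‖ with htdef
  have ht0 : 0 < t := by rw [htdef]; linarith
  obtain ⟨n, hn1, hn2⟩ := exists_level ht0 (by rw [htdef]; linarith)
  have hπ : (0:ℝ) < π := Real.pi_pos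
  obtain ⟨x, hx0, hx2, hxw⟩ : ∃ x : ℝ, 0 ≤ x ∧ x < 2*π ∧
      (↑(‖w‖) * Complex.exp (↑x * Complex.I) = w) := by
    rcases le_or_gt 0 w.arg with h | h
    · exact ⟨w.arg, h, lt_of_le_of_lt (Complex.arg_le_pi w) (by linarith),
        Complex.norm_mul_exp_arg_mul_I w⟩
    · refine ⟨w.arg + 2*π, by linarith [Complex.neg_pi_lt_arg w], by linarith, ?_⟩
      have he : (↑(w.arg + 2*π) : ℂ) * Complex.I
          = ↑w.arg * Complex.I + 2*↑π*Complex.I := by push_cast; ring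
      rw [he, Complex.exp_add, Complex.exp_two_pi_mul_I, mul_one,
        Complex.norm_mul_exp_arg_mul_I]
  set k : ℕ := ⌊(2:ℝ)^n * x / (2*π)⌋₊ with hkdef
  have hPpos : (0:ℝ) < (2:ℝ)^n := by positivity
  have hkn : k < 2^n := by
    have hlt : (2:ℝ)^n * x / (2*π) < ((2^n : ℕ) : ℝ) := by
      rw [div_lt_iff₀ (by positivity)]
      push_cast
      nlinarith [mul_lt_mul_of_pos_left hx2 hPpos]
    exact (Nat.floor_lt (by positivity)).mpr hlt
  have hfl1 : ((k:ℝ)) * (2*π) ≤ (2:ℝ)^n * x := by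
    have := Nat.floor_le (show (0:ℝ) ≤ (2:ℝ)^n * x / (2*π) by positivity)
    rw [le_div_iff₀ (by positivity)] at this
    exact this
  have hfl2 : (2:ℝ)^n * x < ((k:ℝ)+1) * (2*π) := by
    have := Nat.lt_floor_add_one ((2:ℝ)^n * x / (2*π))
    rw [div_lt_iff₀ (by positivity)] at this
    exact this
  have hθ1 : 2*π*(k:ℝ)/2^n ≤ x := by
    rw [div_le_iff₀ hPpos]; nlinarith
  have hθ2 : x - 2*π*(k:ℝ)/2^n < 2*π*(2:ℝ)⁻¹^n := by
    have hx' : x < (2*π*(k:ℝ) + 2*π)/(2:ℝ)^n := by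
      rw [lt_div_iff₀ hPpos]; nlinarith
    have heq : (2*π*(k:ℝ) + 2*π)/(2:ℝ)^n
        = 2*π*(k:ℝ)/(2:ℝ)^n + 2*π*((2:ℝ)^n)⁻¹ := by
      rw [add_div]; ring
    rw [inv_pow]
    linarith [heq ▸ hx']
  set m : ℕ := 2^n + k - 1 with hmdef
  have hm1 : m + 1 = 2^n + k := by
    have h1 : 1 ≤ 2^n := Nat.one_le_two_pow
    omega
  have hLm : bL m = n := by
    rw [bL, hm1]
    refine Nat.log_eq_of_pow_le_of_lt_pow (Nat.le_add_right _ _) ?_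
    rw [pow_succ]; omega
  have hKm : m + 1 - 2 ^ n = k := by rw [hm1]; omega
  have hZm : bZ m = (↑(1 - bdel n) : ℂ) * Complex.exp (↑(2*π*(k:ℝ)/2^n) * Complex.I) := by
    rw [bZ, hLm, hKm]
  have hδ1 : bdel n ≤ (2:ℝ)⁻¹^n := bdel_le n
  have hδ0 : 0 < bdel n := bdel_pos n
  have hconj : (starRingEnd ℂ) (bZ m) * w
      = (↑((1 - bdel n) * ‖w‖) : ℂ)
        * Complex.exp (↑(x - 2*π*(k:ℝ)/2^n) * Complex.I) := by
    conv_lhs => rw [hZm, ← hxw]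
    rw [map_mul, Complex.conj_ofReal, ← Complex.exp_conj]
    have hc : (starRingEnd ℂ) (↑(2*π*(k:ℝ)/2^n) * Complex.I)
        = -(↑(2*π*(k:ℝ)/2^n) * Complex.I) := by
      rw [map_mul, Complex.conj_ofReal, Complex.conj_I]; ring
    rw [hc]
    have he : (↑(x - 2*π*(k:ℝ)/2^n) : ℂ) * Complex.I
        = -(↑(2*π*(k:ℝ)/2^n) * Complex.I) + ↑x * Complex.I := by push_cast; ring
    rw [he, Complex.exp_add]
    push_cast
    ring
  have hA : ‖1 - (starRingEnd ℂ) (bZ m) * w‖ ≤ 15 * t := by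
    rw [hconj]
    set β : ℝ := x - 2*π*(k:ℝ)/2^n with hβdef
    have hβ0 : 0 ≤ β := by rw [hβdef]; linarith
    have hβt : β < 2*π*t := lt_of_lt_of_le hθ2 (by nlinarith)
    have hsplit : (1:ℂ) - ↑((1 - bdel n) * ‖w‖) * Complex.exp (↑β * Complex.I)
        = (1 - Complex.exp (↑β * Complex.I))
          + Complex.exp (↑β * Complex.I) * (1 - ↑((1 - bdel n) * ‖w‖)) := by ring
    rw [hsplit]
    have h1 : ‖1 - Complex.exp (↑β * Complex.I)‖ ≤ 13 * t := by
      have habs : ‖↑β * Complex.I‖ = β := by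
        rw [norm_mul, Complex.norm_real, Real.norm_eq_abs, Complex.norm_I, mul_one, _root_.abs_of_nonneg hβ0]
      rw [norm_sub_rev]
      rcases le_or_gt β 1 with hc | hc
      · have hb := Complex.norm_exp_sub_one_le (x := ↑β * Complex.I) (by rw [habs]; exact hc)
        rw [habs] at hb
        calc ‖Complex.exp (↑β * Complex.I) - 1‖ ≤ 2 * β := hb
          _ ≤ 13 * t := by nlinarith [Real.pi_lt_d2]
      · have h2' : ‖Complex.exp (↑β * Complex.I) - 1‖ ≤ 2 := by
          have hns := norm_sub_le (Complex.exp (↑β * Complex.I)) (1:ℂ)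
          simp only [norm_one] at hns
          rw [Complex.norm_exp_ofReal_mul_I] at hns
          linarith
        have h1t : 1 < 2*π*t := lt_trans hc hβt
        nlinarith [Real.pi_lt_d2]
    have h2 : ‖Complex.exp (↑β * Complex.I)
        * (1 - ↑((1 - bdel n) * ‖w‖))‖ ≤ 2*t := by
      rw [norm_mul, Complex.norm_exp_ofReal_mul_I, one_mul]
      have hcast : (1:ℂ) - ↑((1 - bdel n) * ‖w‖)
          = ↑(1 - (1 - bdel n) * ‖w‖) := by push_cast; ring
      rw [hcast, Complex.norm_real, Real.norm_eq_abs, _root_.abs_of_nonneg (by nlinarith)]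
      nlinarith
    calc ‖(1 - Complex.exp (↑β * Complex.I))
        + Complex.exp (↑β * Complex.I) * (1 - ↑((1 - bdel n) * ‖w‖))‖
        ≤ ‖1 - Complex.exp (↑β * Complex.I)‖
          + ‖Complex.exp (↑β * Complex.I)
            * (1 - ↑((1 - bdel n) * ‖w‖))‖ := norm_add_le _ _
      _ ≤ 15 * t := by linarith
  have hApos : t ≤ ‖1 - (starRingEnd ℂ) (bZ m) * w‖ := abs_one_sub_ge w m
  have hterm : t * bdel n / (225 * t^2)
      ≤ (1 - (‖w‖)^2) * (1 - (‖bZ m‖)^2) /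
          (‖1 - (starRingEnd ℂ) (bZ m) * w‖)^2 := by
    rw [abs_bZ, hLm]
    have hnum : t * bdel n ≤ (1 - (‖w‖)^2) * (1 - (1 - bdel n)^2) := by
      have hb1' : bdel n ≤ 1 := bdel_le_one n
      have f1 : t ≤ 1 - (‖w‖)^2 := by
        nlinarith [mul_nonneg hs0 ht0.le]
      have f2 : bdel n ≤ 1 - (1 - bdel n)^2 := by
        nlinarith [mul_nonneg hδ0.le (by linarith : (0:ℝ) ≤ 1 - bdel n)]
      exact mul_le_mul f1 f2 hδ0.le (by linarith)
    apply div_le_div₀ (le_trans (by positivity) hnum) hnum (by nlinarith) (by nlinarith)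
  have hrp : t ^ ε ≤ (2:ℝ)^ε * ((2:ℝ)^((n:ℝ)*ε))⁻¹ := by
    have h1 : t ^ ε ≤ (2 * (2:ℝ)⁻¹^n) ^ ε := Real.rpow_le_rpow ht0.le hn2.le hε.le
    have h2 : ((2:ℝ) * (2:ℝ)⁻¹^n) ^ ε = (2:ℝ)^ε * ((2:ℝ)^((n:ℝ)*ε))⁻¹ := by
      rw [Real.mul_rpow (by norm_num) (by positivity), inv_pow,
        Real.inv_rpow (by positivity), ← Real.rpow_natCast (2:ℝ) n,
        ← Real.rpow_mul (by norm_num)]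
    rw [← h2]; exact h1
  have hber2 : d^2 * ((n:ℝ)+1)^2 ≤ (2:ℝ)^((n:ℝ)*ε) := by
    have h1 := nat_le_pow hb1 n
    rw [← hddef] at h1
    have h2 : b^n = (2:ℝ)^((ε/2)*(n:ℝ)) := by
      rw [hbdef, ← Real.rpow_natCast ((2:ℝ)^(ε/2)) n, ← Real.rpow_mul (by norm_num)]
    rw [h2] at h1
    have h3 : (0:ℝ) ≤ d * ((n:ℝ)+1) := by positivity
    have h4 := mul_self_le_mul_self h3 h1
    calc d^2*((n:ℝ)+1)^2 = (d*((n:ℝ)+1))*(d*((n:ℝ)+1)) := by ring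
      _ ≤ (2:ℝ)^((ε/2)*(n:ℝ)) * (2:ℝ)^((ε/2)*(n:ℝ)) := h4
      _ = (2:ℝ)^((n:ℝ)*ε) := by rw [← Real.rpow_add (by norm_num)]; ring_nf
  have hkey : (d^2/(450*(2:ℝ)^ε)) * t^ε ≤ t * bdel n / (225*t^2) := by
    have hp : (0:ℝ) < (2:ℝ)^((n:ℝ)*ε) := Real.rpow_pos_of_pos (by norm_num) _
    have step1 : (d^2/(450*(2:ℝ)^ε)) * t^ε
        ≤ (d^2/(450*(2:ℝ)^ε)) * ((2:ℝ)^ε * ((2:ℝ)^((n:ℝ)*ε))⁻¹) :=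
      mul_le_mul_of_nonneg_left hrp (by positivity)
    have step2 : (d^2/(450*(2:ℝ)^ε)) * ((2:ℝ)^ε * ((2:ℝ)^((n:ℝ)*ε))⁻¹)
        = d^2 / (450 * (2:ℝ)^((n:ℝ)*ε)) := by
      have h2ne : ((2:ℝ)^ε) ≠ 0 := ne_of_gt h2e
      field_simp
    have step3 : d^2 / (450*(2:ℝ)^((n:ℝ)*ε)) ≤ 1/(450*((n:ℝ)+1)^2) := by
      rw [div_le_div_iff₀ (by positivity) (by positivity)]
      nlinarith [hber2, sq_nonneg d]
    have step4 : 1/(450*((n:ℝ)+1)^2) ≤ t * bdel n/(225*t^2) := by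
      rw [bdel, div_le_div_iff₀ (by positivity) (by positivity)]
      have hpow2 : (0:ℝ) < (2:ℝ)⁻¹^n := by positivity
      have hq : t * ((2:ℝ)⁻¹^n/((n:ℝ)+1)^2) * (450*((n:ℝ)+1)^2)
          = 450*t*(2:ℝ)⁻¹^n := by field_simp
      rw [hq]
      nlinarith [mul_lt_mul_of_pos_left hn2 ht0]
    calc (d^2/(450*(2:ℝ)^ε)) * t^ε
        ≤ d^2 / (450 * (2:ℝ)^((n:ℝ)*ε)) := step2 ▸ step1
      _ ≤ 1/(450*((n:ℝ)+1)^2) := step3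
      _ ≤ t * bdel n/(225*t^2) := step4
  calc (d^2/(450*(2:ℝ)^ε)) * t^ε ≤ t * bdel n / (225*t^2) := hkey
    _ ≤ (1 - (‖w‖)^2) * (1 - (‖bZ m‖)^2) /
          (‖1 - (starRingEnd ℂ) (bZ m) * w‖)^2 := hterm
    _ ≤ ∑' j : ℕ, (1 - (‖w‖) ^ 2) * (1 - (‖bZ j‖) ^ 2) /
          (‖1 - (starRingEnd ℂ) (bZ j) * w‖) ^ 2 :=
      Summable.le_tsum (summable_terms w hw) m (fun j _ => term_nonneg w hw j)
end

section
/- Let Ψ be an Orlicz function. (1) If Ψ satisfies condition Δ², then Ψ satisfies condition ∇₀ uniformly: there exist C ≥ 1 and x₀ > 0 such that Ψ(βx)·Ψ(y) ≤ Ψ(C·β·y)·Ψ(x) for every β > 1 and all x, y with x₀ ≤ x ≤ y. (2) If Ψ satisfies condition ∇₀ uniformly, then Ψ satisfies condition ∇₁: there exist b > 0 and x₁ > 0 such that Ψ(u)·Ψ(v) ≤ Ψ(b·u·v) for all u, v ≥ x₁. -/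
theorem stmt_17
    (Ψ Ψinv : ℝ → ℝ)
    (hΨ0 : Ψ 0 = 0)
    (hΨmono : StrictMonoOn Ψ (Set.Ici 0))
    (hΨconv : StrictConvexOn ℝ (Set.Ici 0) Ψ)
    (hΨcont : ContinuousOn Ψ (Set.Ici 0))
    (hΨlim : Filter.Tendsto (fun x => Ψ x / x) Filter.atTop Filter.atTop)
    (hΨinv1 : ∀ x, 0 ≤ x → Ψinv (Ψ x) = x)
    (hΨinv2 : ∀ y, 0 ≤ y → Ψ (Ψinv y) = y)
    (hΨinv0 : ∀ y, 0 ≤ y → 0 ≤ Ψinv y) :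
    -- (1) Δ² implies ∇₀ uniformly
    ((∃ α > (1 : ℝ), ∃ x₀ > (0 : ℝ), ∀ x ≥ x₀, (Ψ x) ^ 2 ≤ Ψ (α * x)) →
      ∃ C ≥ (1 : ℝ), ∃ x₀ > (0 : ℝ), ∀ β > (1 : ℝ), ∀ x y : ℝ,
        x₀ ≤ x → x ≤ y → Ψ (β * x) * Ψ y ≤ Ψ (C * β * y) * Ψ x) ∧
    -- (2) ∇₀ uniformly implies ∇₁
    ((∃ C ≥ (1 : ℝ), ∃ x₀ > (0 : ℝ), ∀ β > (1 : ℝ), ∀ x y : ℝ,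
        x₀ ≤ x → x ≤ y → Ψ (β * x) * Ψ y ≤ Ψ (C * β * y) * Ψ x) →
      ∃ b > (0 : ℝ), ∃ x₁ > (0 : ℝ), ∀ u v : ℝ,
        x₁ ≤ u → x₁ ≤ v → Ψ u * Ψ v ≤ Ψ (b * u * v)) := by
  have hmonoOn : MonotoneOn Ψ (Set.Ici 0) := hΨmono.monotoneOn
  have hnonneg : ∀ t : ℝ, 0 ≤ t → 0 ≤ Ψ t := by
    intro t ht
    calc (0:ℝ) = Ψ 0 := hΨ0.symm
    _ ≤ Ψ t := hmonoOn (by simp) (by simpa using ht) ht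
  -- superhomogeneity: K ≥ 1, t ≥ 0 → K * Ψ t ≤ Ψ (K * t)
  have hsuper : ∀ K t : ℝ, 1 ≤ K → 0 ≤ t → K * Ψ t ≤ Ψ (K * t) := by
    intro K t hK ht
    have hKpos : (0:ℝ) < K := by linarith
    have hconv := hΨconv.convexOn
    have h1 : Ψ ((1 - 1/K) • (0:ℝ) + (1/K) • (K * t)) ≤
        (1 - 1/K) * Ψ 0 + (1/K) * Ψ (K * t) := by
      refine hconv.2 (by simp) (by simp [mul_nonneg hKpos.le ht]) ?_ ?_ (by ring)
      · have : 1/K ≤ 1 := by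
          rw [div_le_one hKpos]; exact hK
        linarith
      · positivity
    have harg : (1 - 1/K) • (0:ℝ) + (1/K) • (K * t) = t := by
      field_simp
      rw [smul_zero, zero_add, smul_eq_mul, one_div, ← mul_assoc, inv_mul_cancel₀ hKpos.ne', one_mul]
    rw [harg, hΨ0] at h1
    have : Ψ t ≤ (1/K) * Ψ (K * t) := by linarith
    calc K * Ψ t ≤ K * ((1/K) * Ψ (K * t)) := by
          exact mul_le_mul_of_nonneg_left this hKpos.le
    _ = Ψ (K * t) := by field_simp
  constructor
  · -- Part (1)
    rintro ⟨α, hα, x₀, hx₀, hΔ⟩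
    -- find point where Ψ ≥ 1
    have h1 : ∀ᶠ x in Filter.atTop, (1:ℝ) ≤ Ψ x / x :=
      hΨlim.eventually (Filter.eventually_ge_atTop 1)
    obtain ⟨N, hN⟩ := Filter.eventually_atTop.mp h1
    set x₁ : ℝ := max N (max x₀ 1) with hx₁def
    have hx₁1 : (1:ℝ) ≤ x₁ := le_trans (le_max_right x₀ 1) (le_max_right _ _)
    have hx₁0 : (0:ℝ) < x₁ := by linarith
    have hx₁x₀ : x₀ ≤ x₁ := le_trans (le_max_left x₀ 1) (le_max_right _ _)
    have hΨx₁ : (1:ℝ) ≤ Ψ x₁ := by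
      have := hN x₁ (le_max_left _ _)
      have := (le_div_iff₀ hx₁0).mp this
      linarith
    refine ⟨α, hα.le, x₁, hx₁0, ?_⟩
    intro β hβ x y hx hxy
    have hx0 : 0 ≤ x := by linarith
    have hy0 : 0 ≤ y := by linarith
    have hβ0 : (0:ℝ) < β := by linarith
    set z : ℝ := max (β * x) y with hz
    have hz0 : 0 ≤ z := le_trans hy0 (le_max_right _ _)
    have hzx₀ : x₀ ≤ z := le_trans (le_trans hx₁x₀ (le_trans hx hxy)) (le_max_right _ _)
    have hzβy : z ≤ β * y := by
      apply max_le
      · exact mul_le_mul_of_nonneg_left hxy hβ0.le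
      · nlinarith
    have h2 : Ψ (β * x) * Ψ y ≤ Ψ z * Ψ z := by
      have ha : Ψ (β * x) ≤ Ψ z :=
        hmonoOn (by simp [Set.mem_Ici]; positivity) (by simpa using hz0) (le_max_left _ _)
      have hb : Ψ y ≤ Ψ z :=
        hmonoOn (by simpa using hy0) (by simpa using hz0) (le_max_right _ _)
      exact mul_le_mul ha hb (hnonneg y hy0) (hnonneg z hz0)
    have h3 : Ψ z * Ψ z ≤ Ψ (α * z) := by
      have := hΔ z hzx₀
      nlinarith [this]
    have h4 : Ψ (α * z) ≤ Ψ (α * β * y) := by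
      apply hmonoOn (by simp [Set.mem_Ici]; positivity)
        (by simp [Set.mem_Ici]; positivity)
      nlinarith
    have h5 : Ψ (α * β * y) ≤ Ψ (α * β * y) * Ψ x := by
      have hΨx : (1:ℝ) ≤ Ψ x :=
        le_trans hΨx₁ (hmonoOn (by simpa using hx₁0.le) (by simpa using hx0) hx)
      nlinarith [hnonneg (α * β * y) (by positivity)]
    linarith
  · -- Part (2)
    rintro ⟨C, hC, x₀, hx₀, hH⟩
    set K : ℝ := max (Ψ x₀) 1 with hK
    have hK1 : (1:ℝ) ≤ K := le_max_right _ _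
    refine ⟨K * C / x₀, by positivity, x₀ + 1, by linarith, ?_⟩
    intro u v hu hv
    have hu0 : (0:ℝ) < u := by linarith
    have hv0 : (0:ℝ) < v := by linarith
    have hβ : (1:ℝ) < u / x₀ := by
      rw [lt_div_iff₀ hx₀]; linarith
    have h1 : Ψ (u / x₀ * x₀) * Ψ v ≤ Ψ (C * (u / x₀) * v) * Ψ x₀ :=
      hH (u / x₀) hβ x₀ v le_rfl (by linarith)
    have harg : u / x₀ * x₀ = u := by field_simp
    rw [harg] at h1
    have ht0 : 0 ≤ C * (u / x₀) * v := by positivity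
    have h2 : Ψ (C * (u / x₀) * v) * Ψ x₀ ≤ K * Ψ (C * (u / x₀) * v) := by
      have := le_max_left (Ψ x₀) 1
      nlinarith [hnonneg _ ht0]
    have h3 : K * Ψ (C * (u / x₀) * v) ≤ Ψ (K * (C * (u / x₀) * v)) :=
      hsuper K _ hK1 ht0
    have harg2 : K * (C * (u / x₀) * v) = K * C / x₀ * u * v := by
      field_simp
    rw [harg2] at h3
    linarith
end
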